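/- arXiv:1706.02880 — 5 statements merged into one kernel-verified Lean document; each statement's English description precedes it below -/
import Mathlib

section
/- Let 0 < κ₁ < κ₀ < 1, t₁ ∈ (0,σ), and define λ* := (κ₀ - κ₁)/(g₊(κ₁,κ₀) ∫₀^{t₁} A⁺(0,ξ) dξ), where g₊(κ₁,κ₀) := min_{s∈[κ₁,κ₀]} g(s) > 0 and A⁺(0,t) := ∫₀ᵗ a⁺(ξ) dξ, and assume ∫₀^{t₁} A⁺(0,ξ) dξ > 0. Let 0 < γ₁ ≤ (κ₀ - κ₁)/t₁. Then for every λ > λ*, the solution (x,y) of x' = y, y' = -λ a⁺(t) g(x) with x(0) = κ₀, y(0) = 0 satisfies x(t₁) < κ₁ and y(t₁) < -γ₁. -/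
open MeasureTheory Set

/-- Lemma 2.2: for `λ > λ* = (κ₀-κ₁)/(g₊(κ₁,κ₀) ∫₀^{t₁} A⁺(0,ξ) dξ)` and
`0 < γ₁ ≤ (κ₀-κ₁)/t₁`, the solution of `x' = y, y' = -λ a⁺(t) g(x)` with
`x(0) = κ₀, y(0) = 0` satisfies `x(t₁) < κ₁` and `y(t₁) < -γ₁`. -/
theorem stmt2 (σ t₁ κ₀ κ₁ γ₁ lam : ℝ) (a g x y : ℝ → ℝ)
    (hκ₁ : 0 < κ₁) (hκκ : κ₁ < κ₀) (hκ₀ : κ₀ < 1)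
    (ht₁ : t₁ ∈ Ioo 0 σ)
    (ha0 : ∀ t ∈ Icc 0 σ, 0 ≤ a t)
    (haint : IntegrableOn a (Icc 0 σ))
    (hApos : ∀ t ∈ Ioc (0:ℝ) σ, 0 < ∫ s in (0:ℝ)..t, a s)
    (hgcont : Continuous g) (hgnn : ∀ s, 0 ≤ g s)
    (hg0 : g 0 = 0) (hg1 : g 1 = 0) (hgpos : ∀ s : ℝ, 0 < s → s < 1 → 0 < g s)
    (hgmin : 0 < sInf (g '' Icc κ₁ κ₀))
    (hIpos : 0 < ∫ t in (0:ℝ)..t₁, (∫ s in (0:ℝ)..t, a s))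
    (hγpos : 0 < γ₁) (hγle : γ₁ ≤ (κ₀ - κ₁) / t₁)
    (hlam : lam >
      (κ₀ - κ₁) / (sInf (g '' Icc κ₁ κ₀) * ∫ t in (0:ℝ)..t₁, (∫ s in (0:ℝ)..t, a s)))
    (hcx : ContinuousOn x (Icc 0 σ)) (hcy : ContinuousOn y (Icc 0 σ))
    (hx : ∀ t ∈ Icc 0 σ, x t = x 0 + ∫ s in (0:ℝ)..t, y s)
    (hy : ∀ t ∈ Icc 0 σ, y t = y 0 - lam * ∫ s in (0:ℝ)..t, a s * g (x s))
    (hx0 : x 0 = κ₀) (hy0 : y 0 = 0) :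
    x t₁ < κ₁ ∧ y t₁ < -γ₁ := by
  obtain ⟨ht₁0, ht₁σ⟩ := ht₁
  have hσ0 : (0:ℝ) ≤ σ := le_of_lt (ht₁0.trans ht₁σ)
  set m : ℝ := sInf (g '' Icc κ₁ κ₀) with hm
  set I : ℝ := ∫ t in (0:ℝ)..t₁, (∫ s in (0:ℝ)..t, a s) with hI
  have hmIpos : 0 < m * I := mul_pos hgmin hIpos
  have hlampos : 0 < lam := lt_trans (div_pos (by linarith) hmIpos) hlam
  have hkey : κ₀ - κ₁ < lam * (m * I) := by
    have := (div_lt_iff₀ hmIpos).mp hlam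
    linarith
  -- interval integrability helpers
  have hyii : ∀ u v : ℝ, u ∈ Icc 0 σ → v ∈ Icc 0 σ → IntervalIntegrable y volume u v := by
    intro u v hu hv
    exact (hcy.mono (uIcc_subset_Icc hu hv)).intervalIntegrable
  have haii : ∀ u v : ℝ, u ∈ Icc 0 σ → v ∈ Icc 0 σ → IntervalIntegrable a volume u v := by
    intro u v hu hv
    exact (haint.mono_set (uIcc_subset_Icc hu hv)).intervalIntegrable
  have hgxcont : ContinuousOn (fun s => a s * g (x s)) (Icc 0 σ) →
      True := fun _ => trivial
  have hagint : IntegrableOn (fun s => a s * g (x s)) (Icc 0 σ) :=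
    haint.mul_continuousOn (hgcont.comp_continuousOn hcx) isCompact_Icc
  have hagii : ∀ u v : ℝ, u ∈ Icc 0 σ → v ∈ Icc 0 σ →
      IntervalIntegrable (fun s => a s * g (x s)) volume u v := by
    intro u v hu hv
    exact (hagint.mono_set (uIcc_subset_Icc hu hv)).intervalIntegrable
  have hagnn : ∀ s ∈ Icc (0:ℝ) σ, 0 ≤ a s * g (x s) :=
    fun s hs => mul_nonneg (ha0 s hs) (hgnn _)
  -- y is nonpositive on [0,σ]
  have hynp : ∀ t ∈ Icc (0:ℝ) σ, y t ≤ 0 := by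
    intro t ht
    rw [hy t ht, hy0]
    have h1 : 0 ≤ ∫ s in (0:ℝ)..t, a s * g (x s) :=
      intervalIntegral.integral_nonneg ht.1
        (fun u hu => hagnn u ⟨hu.1, hu.2.trans ht.2⟩)
    nlinarith
  -- x is nonincreasing on [0,σ]
  have hxmono : ∀ s t : ℝ, 0 ≤ s → s ≤ t → t ≤ σ → x t ≤ x s := by
    intro s t hs hst htσ
    have hsm : s ∈ Icc (0:ℝ) σ := ⟨hs, hst.trans htσ⟩
    have htm : t ∈ Icc (0:ℝ) σ := ⟨hs.trans hst, htσ⟩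
    have hsub : (∫ u in (0:ℝ)..t, y u) - ∫ u in (0:ℝ)..s, y u = ∫ u in s..t, y u :=
      intervalIntegral.integral_interval_sub_left (hyii 0 t (by simp [hσ0]) htm)
        (hyii 0 s (by simp [hσ0]) hsm)
    have hle : (∫ u in s..t, y u) ≤ ∫ u in s..t, (0:ℝ) := by
      apply intervalIntegral.integral_mono_on hst (hyii s t hsm htm)
        intervalIntegrable_const
      intro u hu
      exact hynp u ⟨hs.trans hu.1, hu.2.trans htσ⟩
    simp only [intervalIntegral.integral_zero] at hle
    rw [hx t htm, hx s hsm]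
    linarith
  -- y is nonincreasing on [0,σ]
  have hymono : ∀ s t : ℝ, 0 ≤ s → s ≤ t → t ≤ σ → y t ≤ y s := by
    intro s t hs hst htσ
    have hsm : s ∈ Icc (0:ℝ) σ := ⟨hs, hst.trans htσ⟩
    have htm : t ∈ Icc (0:ℝ) σ := ⟨hs.trans hst, htσ⟩
    have hsub : (∫ u in (0:ℝ)..t, a u * g (x u)) - ∫ u in (0:ℝ)..s, a u * g (x u)
        = ∫ u in s..t, a u * g (x u) :=
      intervalIntegral.integral_interval_sub_left (hagii 0 t (by simp [hσ0]) htm)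
        (hagii 0 s (by simp [hσ0]) hsm)
    have hge : 0 ≤ ∫ u in s..t, a u * g (x u) :=
      intervalIntegral.integral_nonneg hst
        (fun u hu => hagnn u ⟨hs.trans hu.1, hu.2.trans htσ⟩)
    rw [hy t htm, hy s hsm]
    nlinarith
  have ht₁m : t₁ ∈ Icc (0:ℝ) σ := ⟨le_of_lt ht₁0, le_of_lt ht₁σ⟩
  have h0m : (0:ℝ) ∈ Icc (0:ℝ) σ := by simp [hσ0]
  -- First claim: x t₁ < κ₁
  have hx1 : x t₁ < κ₁ := by
    by_contra hge
    push_neg at hge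
    -- on [0,t₁], x stays in [κ₁, κ₀], so g (x s) ≥ m
    have hxin : ∀ s ∈ Icc (0:ℝ) t₁, x s ∈ Icc κ₁ κ₀ := by
      intro s hs
      constructor
      · exact le_trans hge (hxmono s t₁ hs.1 hs.2 (le_of_lt ht₁σ))
      · have := hxmono 0 s le_rfl hs.1 (hs.2.trans (le_of_lt ht₁σ))
        rwa [hx0] at this
    have hgm : ∀ s ∈ Icc (0:ℝ) t₁, m ≤ g (x s) := by
      intro s hs
      exact csInf_le ⟨0, fun v hv => by obtain ⟨w, _, rfl⟩ := hv; exact hgnn w⟩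
        ⟨x s, hxin s hs, rfl⟩
    -- y t ≤ -(lam*m) * A t on [0,t₁]
    have hyb : ∀ t ∈ Icc (0:ℝ) t₁, y t ≤ -(lam * m) * ∫ s in (0:ℝ)..t, a s := by
      intro t ht
      have htm : t ∈ Icc (0:ℝ) σ := ⟨ht.1, ht.2.trans (le_of_lt ht₁σ)⟩
      have hmono : (∫ s in (0:ℝ)..t, m * a s) ≤ ∫ s in (0:ℝ)..t, a s * g (x s) := by
        apply intervalIntegral.integral_mono_on ht.1
          ((haii 0 t h0m htm).const_mul m) (hagii 0 t h0m htm)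
        intro u hu
        have hum : u ∈ Icc (0:ℝ) t₁ := ⟨hu.1, hu.2.trans ht.2⟩
        have := hgm u hum
        have ha := ha0 u ⟨hu.1, hu.2.trans htm.2⟩
        nlinarith
      rw [intervalIntegral.integral_const_mul] at hmono
      rw [hy t htm, hy0]
      nlinarith
    -- integrate the bound
    have hAcont : ContinuousOn (fun t => ∫ s in (0:ℝ)..t, a s) (Icc 0 σ) := by
      have := intervalIntegral.continuousOn_primitive_interval
        (f := a) (μ := volume) (a := (0:ℝ)) (b := σ)
        (by rwa [uIcc_of_le hσ0])
      rwa [uIcc_of_le hσ0] at this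
    have hAii : IntervalIntegrable (fun t => -(lam * m) * ∫ s in (0:ℝ)..t, a s)
        volume 0 t₁ :=
      (((hAcont.mono (uIcc_subset_Icc h0m ht₁m))).intervalIntegrable).const_mul _
    have hint : (∫ t in (0:ℝ)..t₁, y t) ≤
        ∫ t in (0:ℝ)..t₁, -(lam * m) * ∫ s in (0:ℝ)..t, a s := by
      apply intervalIntegral.integral_mono_on (le_of_lt ht₁0)
        (hyii 0 t₁ h0m ht₁m) hAii
      exact hyb
    rw [intervalIntegral.integral_const_mul] at hint
    have hxeq := hx t₁ ht₁m
    rw [hx0] at hxeq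
    have : x t₁ ≤ κ₀ + -(lam * m) * I := by rw [hxeq]; linarith
    nlinarith
  -- Second claim: y t₁ < -γ₁
  refine ⟨hx1, ?_⟩
  -- find t* with x t* = κ₁
  have hIVT : κ₁ ∈ x '' Icc 0 t₁ := by
    apply intermediate_value_Icc' (le_of_lt ht₁0)
      (hcx.mono (Icc_subset_Icc le_rfl (le_of_lt ht₁σ)))
    exact ⟨le_of_lt hx1, by rw [hx0]; exact le_of_lt hκκ⟩
  obtain ⟨ts, hts, hxts⟩ := hIVT
  have htspos : 0 < ts := by
    rcases lt_or_eq_of_le hts.1 with h | h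
    · exact h
    · exfalso; rw [← h] at hxts; rw [hx0] at hxts; linarith
  have htslt : ts < t₁ := by
    rcases lt_or_eq_of_le hts.2 with h | h
    · exact h
    · exfalso; rw [h] at hxts; linarith
  have htsm : ts ∈ Icc (0:ℝ) σ := ⟨le_of_lt htspos, hts.2.trans (le_of_lt ht₁σ)⟩
  -- κ₀ - κ₁ = -∫₀^{ts} y ≤ -ts * y ts
  have hxeq := hx ts htsm
  rw [hx0, hxts] at hxeq
  have hconst : (∫ u in (0:ℝ)..ts, y ts) ≤ ∫ u in (0:ℝ)..ts, y u := by
    apply intervalIntegral.integral_mono_on (le_of_lt htspos)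
      intervalIntegrable_const (hyii 0 ts h0m htsm)
    intro u hu
    exact hymono u ts hu.1 hu.2 htsm.2
  rw [intervalIntegral.integral_const, smul_eq_mul] at hconst
  have hyts : y ts ≤ (κ₁ - κ₀) / ts := by
    rw [le_div_iff₀ htspos]
    nlinarith
  have hy1 : y t₁ ≤ y ts := hymono ts t₁ (le_of_lt htspos) (le_of_lt htslt) (le_of_lt ht₁σ)
  have hdiv : (κ₀ - κ₁) / t₁ < (κ₀ - κ₁) / ts :=
    div_lt_div_of_pos_left (by linarith) htspos htslt
  have : (κ₁ - κ₀) / ts = -((κ₀ - κ₁) / ts) := by ring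
  rw [this] at hyts
  linarith
end

section
/- Let λ > 0 and ν ∈ (0,π/2), and suppose a⁺ ∈ L^∞(0,σ). Choose ε̂ > 0 such that arctan(√(λ‖a⁺‖_∞ ε) · tan(σ√(λ‖a⁺‖_∞ ε))) < ν for all ε ∈ (0,ε̂). Then for each ε ∈ (0,ε̂) there exists δ_ε ∈ (0,1) with g(s) ≤ εs on [0,δ_ε], and for every κ ∈ (0,δ_ε], the solution (x,y) of x' = y, y' = -λ a⁺(t) g(x) with x(0) = κ, y(0) = 0 satisfies -ν ≤ arctan(y(t)/x(t)) ≤ 0 for all t ∈ [0,σ]; in particular x(t) > 0 on [0,σ]. -/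
open MeasureTheory Set

/-- Core dynamical estimate: if `ω = √(λMε)` with `σω < π/2`, `g(s) ≤ εs` on `[0,δ]`,
then the solution stays in the cone. -/
lemma stmt3_core (σ lam ν M ε δ : ℝ) (a g : ℝ → ℝ)
    (hσ : 0 < σ) (hlam : 0 < lam) (hν : ν ∈ Ioo 0 (Real.pi / 2))
    (hM : 0 < M) (hε : 0 < ε) (hδ : δ ∈ Ioo (0:ℝ) 1)
    (ha0 : ∀ t ∈ Icc 0 σ, 0 ≤ a t) (haM : ∀ t ∈ Icc 0 σ, a t ≤ M)
    (haint : IntegrableOn a (Icc 0 σ))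
    (hgcont : Continuous g) (hgnn : ∀ s, 0 ≤ g s)
    (hgδ : ∀ s ∈ Icc (0:ℝ) δ, g s ≤ ε * s)
    (hσω : σ * Real.sqrt (lam * M * ε) < Real.pi / 2)
    (harc : Real.arctan (Real.sqrt (lam * M * ε) *
      Real.tan (σ * Real.sqrt (lam * M * ε))) < ν) :
    ∀ κ ∈ Ioc (0:ℝ) δ, ∀ x y : ℝ → ℝ,
        ContinuousOn x (Icc 0 σ) → ContinuousOn y (Icc 0 σ) →
        (∀ t ∈ Icc 0 σ, x t = κ + ∫ s in (0:ℝ)..t, y s) →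
        (∀ t ∈ Icc 0 σ, y t = -lam * ∫ s in (0:ℝ)..t, a s * g (x s)) →
        ∀ t ∈ Icc 0 σ,
          0 < x t ∧ -ν ≤ Real.arctan (y t / x t) ∧ Real.arctan (y t / x t) ≤ 0 := by
  intro κ hκ x y hxc hyc hxe hye
  have h0mem : (0:ℝ) ∈ Icc 0 σ := ⟨le_rfl, hσ.le⟩
  set ω : ℝ := Real.sqrt (lam * M * ε) with hωdef
  have hωpos : 0 < ω := Real.sqrt_pos.2 (by positivity)
  have hω2 : ω ^ 2 = lam * M * ε := Real.sq_sqrt (by positivity)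
  set K : ℝ := ω * Real.tan (σ * ω) with hKdef
  have hπ : (0:ℝ) < Real.pi := Real.pi_pos
  have htan_nonneg : 0 ≤ Real.tan (σ * ω) :=
    Real.tan_nonneg_of_nonneg_of_le_pi_div_two (by positivity) hσω.le
  have hK0 : 0 ≤ K := mul_nonneg hωpos.le htan_nonneg
  -- basic facts about cos/sin of ω t
  have hcospos : ∀ t ∈ Icc 0 σ, 0 < Real.cos (ω * t) := by
    intro t ht
    apply Real.cos_pos_of_mem_Ioo
    constructor
    · nlinarith [ht.1, hωpos]
    · nlinarith [ht.2, hωpos]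
  have hsinnn : ∀ t ∈ Icc 0 σ, 0 ≤ Real.sin (ω * t) := by
    intro t ht
    apply Real.sin_nonneg_of_nonneg_of_le_pi
    · nlinarith [ht.1, hωpos]
    · nlinarith [ht.2, hωpos, hπ]
  have htanle : ∀ t ∈ Icc 0 σ, Real.tan (ω * t) ≤ Real.tan (σ * ω) := by
    intro t ht
    have h1 : ω * t ∈ Ioo (-(Real.pi/2)) (Real.pi/2) := by
      constructor
      · nlinarith [ht.1, hωpos]
      · nlinarith [ht.2, hωpos]
    have h2 : σ * ω ∈ Ioo (-(Real.pi/2)) (Real.pi/2) := by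
      constructor
      · nlinarith
      · exact hσω
    exact Real.strictMonoOn_tan.monotoneOn h1 h2 (by nlinarith [ht.2, hωpos])
  -- integrability
  have hgxcont : ContinuousOn (fun s => g (x s)) (Icc 0 σ) := hgcont.comp_continuousOn hxc
  set f : ℝ → ℝ := fun s => a s * g (x s) with hfdef
  have hf_int : IntegrableOn f (Icc 0 σ) :=
    haint.mul_continuousOn hgxcont isCompact_Icc
  have hsub : ∀ s t : ℝ, s ∈ Icc 0 σ → t ∈ Icc 0 σ → uIcc s t ⊆ Icc 0 σ := by
    intro s t hs ht
    rw [uIcc]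
    exact Icc_subset_Icc (le_inf hs.1 ht.1) (sup_le hs.2 ht.2)
  have hf_ii : ∀ s t : ℝ, s ∈ Icc 0 σ → t ∈ Icc 0 σ → IntervalIntegrable f volume s t := by
    intro s t hs ht
    exact (hf_int.mono_set (hsub s t hs ht)).intervalIntegrable
  have hy_ii : ∀ s t : ℝ, s ∈ Icc 0 σ → t ∈ Icc 0 σ → IntervalIntegrable y volume s t := by
    intro s t hs ht
    exact (hyc.mono (hsub s t hs ht)).intervalIntegrable
  have hx_ii : ∀ s t : ℝ, s ∈ Icc 0 σ → t ∈ Icc 0 σ → IntervalIntegrable x volume s t := by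
    intro s t hs ht
    exact (hxc.mono (hsub s t hs ht)).intervalIntegrable
  have hfnn : ∀ u ∈ Icc 0 σ, 0 ≤ f u := fun u hu => mul_nonneg (ha0 u hu) (hgnn _)
  -- x 0 = κ, y 0 = 0
  have hx0 : x 0 = κ := by
    have := hxe 0 h0mem; simpa using this
  have hy0 : y 0 = 0 := by
    have := hye 0 h0mem; simpa using this
  -- y ≤ 0 and x ≤ κ on [0,σ]
  have hynonpos : ∀ t ∈ Icc 0 σ, y t ≤ 0 := by
    intro t ht
    rw [hye t ht]
    have h1 : 0 ≤ ∫ s in (0:ℝ)..t, f s :=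
      intervalIntegral.integral_nonneg ht.1
        (fun u hu => hfnn u ⟨hu.1, hu.2.trans ht.2⟩)
    nlinarith
  have hxκ : ∀ t ∈ Icc 0 σ, x t ≤ κ := by
    intro t ht
    rw [hxe t ht]
    have h2 : IntervalIntegrable (fun _ : ℝ => (0:ℝ)) volume 0 t := intervalIntegrable_const
    have h1 : (∫ s in (0:ℝ)..t, y s) ≤ ∫ s in (0:ℝ)..t, (0:ℝ) := by
      apply intervalIntegral.integral_mono_on ht.1 (hy_ii 0 t h0mem ht) h2
      intro u hu; exact hynonpos u ⟨hu.1, hu.2.trans ht.2⟩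
    simp only [intervalIntegral.integral_zero] at h1
    linarith
  -- derivatives of x and z
  have hx_deriv : ∀ u ∈ Ioo 0 σ, HasDerivAt x (y u) u := by
    intro u hu
    have hmeas := ContinuousOn.stronglyMeasurableAtFilter (μ := volume) isOpen_Ioo
      (hyc.mono Ioo_subset_Icc_self)
    have hX : HasDerivAt (fun t => κ + ∫ s in (0:ℝ)..t, y s) (y u) u := by
      apply HasDerivAt.const_add
      exact intervalIntegral.integral_hasDerivAt_right
        (hy_ii 0 u h0mem ⟨hu.1.le, hu.2.le⟩) (hmeas u hu)
        (hyc.continuousAt (Icc_mem_nhds hu.1 hu.2))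
    apply hX.congr_of_eventuallyEq
    filter_upwards [Icc_mem_nhds hu.1 hu.2] with v hv
    exact hxe v hv
  set z : ℝ → ℝ := fun t => -(ω^2) * ∫ s in (0:ℝ)..t, x s with hzdef
  have hz_deriv : ∀ u ∈ Ioo 0 σ, HasDerivAt z (-(ω^2) * x u) u := by
    intro u hu
    have hmeas := ContinuousOn.stronglyMeasurableAtFilter (μ := volume) isOpen_Ioo
      (hxc.mono Ioo_subset_Icc_self)
    exact (intervalIntegral.integral_hasDerivAt_right
      (hx_ii 0 u h0mem ⟨hu.1.le, hu.2.le⟩) (hmeas u hu)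
      (hxc.continuousAt (Icc_mem_nhds hu.1 hu.2))).const_mul _
  have hz_cont : ContinuousOn z (Icc 0 σ) := by
    apply continuousOn_const.mul
    have := intervalIntegral.continuousOn_primitive_interval
      (a := 0) (b := σ) (μ := volume) (f := x) ?_
    · rwa [uIcc_of_le hσ.le] at this
    · rw [uIcc_of_le hσ.le]; exact hxc.integrableOn_Icc
  set m : ℝ → ℝ := fun t => y t - z t with hmdef
  have hz0 : z 0 = 0 := by simp [hzdef]
  have hm0 : m 0 = 0 := by simp [hmdef, hy0, hz0]
  -- monotonicity of m on regions where x ≥ 0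
  have hm_mono : ∀ T ∈ Icc 0 σ, (∀ u ∈ Icc 0 T, 0 ≤ x u) →
      ∀ s ∈ Icc 0 T, ∀ t ∈ Icc 0 T, s ≤ t → m s ≤ m t := by
    intro T hT hreg s hs t ht hst
    have hsσ : s ∈ Icc 0 σ := ⟨hs.1, hs.2.trans hT.2⟩
    have htσ : t ∈ Icc 0 σ := ⟨ht.1, ht.2.trans hT.2⟩
    have hys : y t - y s = -lam * ∫ u in s..t, f u := by
      rw [hye t htσ, hye s hsσ, ← mul_sub,
        intervalIntegral.integral_interval_sub_left (hf_ii 0 t h0mem htσ)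
          (hf_ii 0 s h0mem hsσ)]
    have hzs : z t - z s = -(ω^2) * ∫ u in s..t, x u := by
      simp only [hzdef]
      rw [← mul_sub,
        intervalIntegral.integral_interval_sub_left (hx_ii 0 t h0mem htσ)
          (hx_ii 0 s h0mem hsσ)]
    have hmm : m t - m s = ∫ u in s..t, (ω^2 * x u - lam * f u) := by
      have : m t - m s = (y t - y s) - (z t - z s) := by simp [hmdef]; ring
      rw [this, hys, hzs,
        intervalIntegral.integral_sub (((hx_ii s t hsσ htσ).const_mul _))
          ((hf_ii s t hsσ htσ).const_mul _),
        intervalIntegral.integral_const_mul, intervalIntegral.integral_const_mul]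
      ring
    have hnn : 0 ≤ ∫ u in s..t, (ω^2 * x u - lam * f u) := by
      apply intervalIntegral.integral_nonneg hst
      intro u hu
      have huT : u ∈ Icc 0 T := ⟨hs.1.trans hu.1, hu.2.trans ht.2⟩
      have huσ : u ∈ Icc 0 σ := ⟨huT.1, huT.2.trans hT.2⟩
      have hxu0 : 0 ≤ x u := hreg u huT
      have hxuδ : x u ≤ δ := (hxκ u huσ).trans hκ.2
      have hgle : g (x u) ≤ ε * x u := hgδ (x u) ⟨hxu0, hxuδ⟩
      have hfle : f u ≤ M * (ε * x u) := by
        apply mul_le_mul (haM u huσ) hgle (hgnn _) hM.le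
      have : lam * f u ≤ lam * (M * (ε * x u)) :=
        mul_le_mul_of_nonneg_left hfle hlam.le
      nlinarith [hω2]
    linarith
  have hm_nn : ∀ T ∈ Icc 0 σ, (∀ u ∈ Icc 0 T, 0 ≤ x u) →
      ∀ s ∈ Icc 0 T, 0 ≤ m s := by
    intro T hT hreg s hs
    have := hm_mono T hT hreg 0 ⟨le_rfl, hs.1.trans hs.2⟩ s hs hs.1
    linarith [hm0]
  -- the function φ and its monotonicity
  set φ : ℝ → ℝ := fun t => z t * Real.cos (ω*t) + ω * Real.sin (ω*t) * x t with hφdef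
  have hφ_deriv : ∀ u ∈ Ioo 0 σ, HasDerivAt φ (ω * Real.sin (ω*u) * m u) u := by
    intro u hu
    have h1 := hz_deriv u hu
    have h2 := hx_deriv u hu
    have hlin : HasDerivAt (fun t : ℝ => ω * t) ω u := by
      simpa using (hasDerivAt_id u).const_mul ω
    have hcos : HasDerivAt (fun t => Real.cos (ω*t)) (-Real.sin (ω*u) * ω) u :=
      (Real.hasDerivAt_cos (ω*u)).comp u hlin
    have hsin : HasDerivAt (fun t => Real.sin (ω*t)) (Real.cos (ω*u) * ω) u :=
      (Real.hasDerivAt_sin (ω*u)).comp u hlin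
    have : HasDerivAt (fun t => z t * Real.cos (ω*t) + ω * Real.sin (ω*t) * x t)
        (-(ω^2) * x u * Real.cos (ω*u) + z u * (-Real.sin (ω*u) * ω)
          + (ω * (Real.cos (ω*u) * ω) * x u + ω * Real.sin (ω*u) * y u)) u :=
      (h1.mul hcos).add (((hsin.const_mul ω)).mul h2)
    convert this using 1
    simp only [hmdef]
    ring
  have hφ0 : φ 0 = 0 := by simp [hφdef, hz0, hx0]
  have hφcont : ContinuousOn φ (Icc 0 σ) := by
    apply ContinuousOn.add
    · exact hz_cont.mul (Real.continuous_cos.comp (continuous_const.mul continuous_id)).continuousOn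
    · exact (continuous_const.mul
        (Real.continuous_sin.comp (continuous_const.mul continuous_id))).continuousOn.mul hxc
  -- W(t) := y t cos(ωt) + ω sin(ωt) x t ≥ 0 on good regions
  have hW : ∀ T ∈ Icc 0 σ, (∀ u ∈ Icc 0 T, 0 ≤ x u) →
      ∀ t ∈ Icc 0 T, 0 ≤ y t * Real.cos (ω*t) + ω * Real.sin (ω*t) * x t := by
    intro T hT hreg t ht
    have hmono : MonotoneOn φ (Icc 0 T) := by
      apply monotoneOn_of_deriv_nonneg (convex_Icc 0 T)
        (hφcont.mono (Icc_subset_Icc le_rfl hT.2))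
      · intro u hu
        rw [interior_Icc] at hu
        exact ((hφ_deriv u ⟨hu.1, hu.2.trans_le hT.2⟩).differentiableAt).differentiableWithinAt
      · intro u hu
        rw [interior_Icc] at hu
        have huσ : u ∈ Ioo 0 σ := ⟨hu.1, hu.2.trans_le hT.2⟩
        rw [(hφ_deriv u huσ).deriv]
        have h1 : 0 ≤ Real.sin (ω*u) := hsinnn u ⟨hu.1.le, huσ.2.le⟩
        have h2 : 0 ≤ m u := hm_nn T hT hreg u ⟨hu.1.le, hu.2.le⟩
        exact mul_nonneg (mul_nonneg hωpos.le h1) h2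
    have hφt : 0 ≤ φ t := by
      have := hmono ⟨le_rfl, ht.1.trans ht.2⟩ ht ht.1
      linarith [hφ0]
    have htσ : t ∈ Icc 0 σ := ⟨ht.1, ht.2.trans hT.2⟩
    have hcm : 0 ≤ m t * Real.cos (ω*t) :=
      mul_nonneg (hm_nn T hT hreg t ht) (hcospos t htσ).le
    have hyt : y t = m t + z t := by simp [hmdef]
    rw [hyt]
    have : (m t + z t) * Real.cos (ω*t) + ω * Real.sin (ω*t) * x t
        = m t * Real.cos (ω*t) + φ t := by simp only [hφdef]; ring
    rw [this]
    linarith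
  -- key pointwise bound y + K x ≥ 0 on good regions
  have hyK : ∀ T ∈ Icc 0 σ, (∀ u ∈ Icc 0 T, 0 ≤ x u) →
      ∀ u ∈ Icc 0 T, 0 ≤ y u + K * x u := by
    intro T hT hreg u hu
    have huσ : u ∈ Icc 0 σ := ⟨hu.1, hu.2.trans hT.2⟩
    have hc := hcospos u huσ
    have hc' : (0:ℝ) < Real.cos (ω*u) := hc
    rw [← mul_nonneg_iff_of_pos_right hc']
    have hW' := hW T hT hreg u hu
    have htu : Real.tan (ω*u) ≤ Real.tan (σ*ω) := htanle u huσ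
    have hcosne : Real.cos (ω*u) ≠ 0 := hc.ne'
    have hsin_eq : Real.tan (ω*u) * Real.cos (ω*u) = Real.sin (ω*u) :=
      Real.tan_mul_cos hcosne
    have hx0u : 0 ≤ x u := hreg u hu
    have h3 : ω * Real.sin (ω*u) * x u ≤ K * Real.cos (ω*u) * x u := by
      rw [hKdef, ← hsin_eq]
      have h4 := mul_le_mul_of_nonneg_right
        (mul_le_mul_of_nonneg_right htu hc.le) hx0u
      have h5 := mul_le_mul_of_nonneg_left h4 hωpos.le
      linarith
    have hexp : (y u + K * x u) * Real.cos (ω*u)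
        = (y u * Real.cos (ω*u) + ω * Real.sin (ω*u) * x u)
          + (K * Real.cos (ω*u) * x u - ω * Real.sin (ω*u) * x u) := by ring
    rw [hexp]
    linarith
  -- positivity of x on [0,σ]
  have hxpos : ∀ t ∈ Icc 0 σ, 0 < x t := by
    by_contra hcon
    push_neg at hcon
    obtain ⟨t₀, ht₀, hxt₀⟩ := hcon
    set C : Set ℝ := {t ∈ Icc 0 σ | x t ≤ 0} with hCdef
    have hCne : C.Nonempty := ⟨t₀, ht₀, hxt₀⟩
    have hCclosed : IsClosed C := by
      have : C = Icc 0 σ ∩ x ⁻¹' (Iic 0) := rfl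
      rw [this]
      exact hxc.preimage_isClosed_of_isClosed isClosed_Icc isClosed_Iic
    have hCbdd : BddBelow C := ⟨0, fun t ht => ht.1.1⟩
    set t₁ : ℝ := sInf C with ht₁def
    have ht₁C : t₁ ∈ C := hCclosed.csInf_mem hCne hCbdd
    have ht₁σ : t₁ ∈ Icc 0 σ := ht₁C.1
    have hxt₁ : x t₁ ≤ 0 := ht₁C.2
    have ht₁pos : 0 < t₁ := by
      rcases (lt_or_eq_of_le ht₁σ.1) with h | h
      · exact h
      · exfalso; rw [← h] at hxt₁; rw [hx0] at hxt₁; linarith [hκ.1]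
    -- x ≥ 0 on [0, t₁]
    have hreg : ∀ u ∈ Icc 0 t₁, 0 ≤ x u := by
      have hIco : Ico (0:ℝ) t₁ ⊆ {t ∈ Icc 0 σ | 0 ≤ x t} := by
        intro u hu
        have huσ : u ∈ Icc 0 σ := ⟨hu.1, hu.2.le.trans ht₁σ.2⟩
        refine ⟨huσ, ?_⟩
        by_contra hneg
        push_neg at hneg
        have : u ∈ C := ⟨huσ, hneg.le⟩
        have := csInf_le hCbdd this
        linarith [hu.2]
      have hDclosed : IsClosed {t ∈ Icc 0 σ | 0 ≤ x t} := by
        have : {t ∈ Icc 0 σ | 0 ≤ x t} = Icc 0 σ ∩ x ⁻¹' (Ici 0) := rfl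
        rw [this]
        exact hxc.preimage_isClosed_of_isClosed isClosed_Icc isClosed_Ici
      intro u hu
      have : Icc (0:ℝ) t₁ ⊆ {t ∈ Icc 0 σ | 0 ≤ x t} := by
        rw [← closure_Ico ht₁pos.ne]
        exact hDclosed.closure_subset_iff.2 hIco
      exact (this hu).2
    -- ψ := x t * exp(K t) is monotone on [0,t₁]
    have hψmono : MonotoneOn (fun t => x t * Real.exp (K*t)) (Icc 0 t₁) := by
      apply monotoneOn_of_deriv_nonneg (convex_Icc 0 t₁)
      · exact (hxc.mono (Icc_subset_Icc le_rfl ht₁σ.2)).mul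
          (Real.continuous_exp.comp (continuous_const.mul continuous_id)).continuousOn
      · intro u hu
        rw [interior_Icc] at hu
        have huσ : u ∈ Ioo 0 σ := ⟨hu.1, hu.2.trans_le ht₁σ.2⟩
        have hexp : HasDerivAt (fun t : ℝ => Real.exp (K*t)) (Real.exp (K*u) * K) u :=
          (Real.hasDerivAt_exp (K*u)).comp u (by simpa using (hasDerivAt_id u).const_mul K)
        exact (((hx_deriv u huσ).mul hexp)).differentiableAt.differentiableWithinAt
      · intro u hu
        rw [interior_Icc] at hu
        have huσ : u ∈ Ioo 0 σ := ⟨hu.1, hu.2.trans_le ht₁σ.2⟩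
        have hexp : HasDerivAt (fun t : ℝ => Real.exp (K*t)) (Real.exp (K*u) * K) u :=
          (Real.hasDerivAt_exp (K*u)).comp u (by simpa using (hasDerivAt_id u).const_mul K)
        have hd : HasDerivAt (fun t => x t * Real.exp (K*t))
            (y u * Real.exp (K*u) + x u * (Real.exp (K*u) * K)) u := (hx_deriv u huσ).mul hexp
        rw [hd.deriv]
        have hkey : 0 ≤ y u + K * x u := hyK t₁ ht₁σ hreg u ⟨hu.1.le, hu.2.le⟩
        have hepos : (0:ℝ) ≤ Real.exp (K*u) := (Real.exp_pos _).le
        have := mul_nonneg hkey hepos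
        linarith
    have h1 : x 0 * Real.exp (K*0) ≤ x t₁ * Real.exp (K*t₁) :=
      hψmono ⟨le_rfl, ht₁pos.le⟩ ⟨ht₁pos.le, le_rfl⟩ ht₁pos.le
    rw [hx0] at h1
    simp only [mul_zero, Real.exp_zero, mul_one] at h1
    have := mul_nonpos_of_nonpos_of_nonneg hxt₁ (Real.exp_pos (K*t₁)).le
    linarith [hκ.1]
  -- conclusion
  intro t ht
  have hxt := hxpos t ht
  refine ⟨hxt, ?_, ?_⟩
  · -- lower bound
    have hreg : ∀ u ∈ Icc 0 σ, 0 ≤ x u := fun u hu => (hxpos u hu).le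
    have hkey : 0 ≤ y t + K * x t := hyK σ (right_mem_Icc.2 hσ.le) hreg t ht
    have hdiv : -K ≤ y t / x t := by
      rw [le_div_iff₀ hxt]
      linarith
    have h1 : Real.arctan (-K) ≤ Real.arctan (y t / x t) :=
      Real.arctan_strictMono.monotone hdiv
    rw [Real.arctan_neg] at h1
    have h2 : Real.arctan K < ν := harc
    linarith
  · -- upper bound
    have hdiv : y t / x t ≤ 0 := div_nonpos_iff.2 (Or.inr ⟨hynonpos t ht, hxt.le⟩)
    have := Real.arctan_strictMono.monotone hdiv
    rwa [Real.arctan_zero] at this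

/-- Lemma 2.3: small-amplitude angular estimate.  For `λ > 0`, `ν ∈ (0,π/2)`,
`a⁺ ∈ L^∞(0,σ)` with bound `M`, and `ε̂` chosen so that
`arctan(√(λMε) tan(σ√(λMε))) < ν` for all `ε ∈ (0,ε̂)`, for each `ε ∈ (0,ε̂)`
there is `δ_ε ∈ (0,1)` with `g(s) ≤ εs` on `[0,δ_ε]`, such that for every
`κ ∈ (0,δ_ε]` the solution of `x' = y, y' = -λ a⁺(t) g(x)`, `x(0)=κ, y(0)=0`,
satisfies `-ν ≤ arctan(y/x) ≤ 0` on `[0,σ]`; in particular `x > 0` there. -/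
theorem stmt3 (σ lam ν M εhat : ℝ) (a g : ℝ → ℝ)
    (hσ : 0 < σ) (hlam : 0 < lam) (hν : ν ∈ Ioo 0 (Real.pi / 2))
    (ha0 : ∀ t ∈ Icc 0 σ, 0 ≤ a t) (haM : ∀ t ∈ Icc 0 σ, a t ≤ M)
    (haint : IntegrableOn a (Icc 0 σ))
    (hgcont : Continuous g) (hgnn : ∀ s, 0 ≤ g s)
    (hgneg : ∀ s : ℝ, s ≤ 0 → g s = 0)
    (hglim : Filter.Tendsto (fun s => g s / s) (nhdsWithin 0 (Ioi 0)) (nhds 0))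
    (hεhat : 0 < εhat)
    (hεcond : ∀ ε ∈ Ioo (0:ℝ) εhat,
      Real.arctan (Real.sqrt (lam * M * ε) * Real.tan (σ * Real.sqrt (lam * M * ε))) < ν) :
    ∀ ε ∈ Ioo (0:ℝ) εhat, ∃ δ ∈ Ioo (0:ℝ) 1,
      (∀ s ∈ Icc (0:ℝ) δ, g s ≤ ε * s) ∧
      ∀ κ ∈ Ioc (0:ℝ) δ, ∀ x y : ℝ → ℝ,
        ContinuousOn x (Icc 0 σ) → ContinuousOn y (Icc 0 σ) →
        (∀ t ∈ Icc 0 σ, x t = κ + ∫ s in (0:ℝ)..t, y s) →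
        (∀ t ∈ Icc 0 σ, y t = -lam * ∫ s in (0:ℝ)..t, a s * g (x s)) →
        ∀ t ∈ Icc 0 σ,
          0 < x t ∧ -ν ≤ Real.arctan (y t / x t) ∧ Real.arctan (y t / x t) ≤ 0 := by
  have h0mem : (0:ℝ) ∈ Icc 0 σ := ⟨le_rfl, hσ.le⟩
  have hM0 : 0 ≤ M := le_trans (ha0 0 h0mem) (haM 0 h0mem)
  have hπ : (0:ℝ) < Real.pi := Real.pi_pos
  intro ε hε
  -- choose δ
  obtain ⟨δ₀, hδ₀pos, hδ₀⟩ : ∃ δ₀ > 0, ∀ s : ℝ, s ∈ Ioi (0:ℝ) → dist s 0 < δ₀ →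
      dist (g s / s) 0 < ε := by
    rw [Metric.tendsto_nhdsWithin_nhds] at hglim
    obtain ⟨δ₀, h1, h2⟩ := hglim ε hε.1
    exact ⟨δ₀, h1, fun s hs hd => h2 hs hd⟩
  set δ : ℝ := min (δ₀/2) (1/2) with hδdef
  have hδpos : 0 < δ := by
    apply lt_min <;> linarith
  have hδ1 : δ < 1 := by
    apply min_lt_of_right_lt; linarith
  have hgδ : ∀ s ∈ Icc (0:ℝ) δ, g s ≤ ε * s := by
    intro s hs
    rcases eq_or_lt_of_le hs.1 with h | h
    · rw [← h, hgneg 0 le_rfl]; simp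
    · have hd : dist s 0 < δ₀ := by
        rw [Real.dist_eq, sub_zero, abs_of_pos h]
        have := hs.2
        have : δ ≤ δ₀/2 := min_le_left _ _
        linarith [hs.2]
      have := hδ₀ s h hd
      rw [Real.dist_eq, sub_zero] at this
      have h2 : g s / s ≤ |g s / s| := le_abs_self _
      have h3 : g s / s < ε := lt_of_le_of_lt h2 this
      calc g s = (g s / s) * s := by field_simp
      _ ≤ ε * s := mul_le_mul_of_nonneg_right h3.le h.le
  refine ⟨δ, ⟨hδpos, hδ1⟩, hgδ, ?_⟩
  rcases eq_or_lt_of_le hM0 with hM | hM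
  · -- M = 0 : a ≡ 0 on [0,σ]
    intro κ hκ x y hxc hyc hxe hye
    have ha0' : ∀ t ∈ Icc 0 σ, a t = 0 := fun t ht =>
      le_antisymm (by rw [hM]; exact haM t ht) (ha0 t ht)
    have hy0 : ∀ t ∈ Icc 0 σ, y t = 0 := by
      intro t ht
      rw [hye t ht]
      have : (∫ s in (0:ℝ)..t, a s * g (x s)) = ∫ s in (0:ℝ)..t, (0:ℝ) := by
        apply intervalIntegral.integral_congr
        intro s hs
        rw [uIcc_of_le ht.1] at hs
        show a s * g (x s) = 0
        rw [ha0' s ⟨hs.1, hs.2.trans ht.2⟩, zero_mul]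
      rw [this]; simp
    have hx0 : ∀ t ∈ Icc 0 σ, x t = κ := by
      intro t ht
      rw [hxe t ht]
      have : (∫ s in (0:ℝ)..t, y s) = ∫ s in (0:ℝ)..t, (0:ℝ) := by
        apply intervalIntegral.integral_congr
        intro s hs
        rw [uIcc_of_le ht.1] at hs
        show y s = 0
        exact hy0 s ⟨hs.1, hs.2.trans ht.2⟩
      rw [this]; simp
    intro t ht
    rw [hx0 t ht, hy0 t ht]
    refine ⟨hκ.1, ?_, ?_⟩
    · rw [zero_div, Real.arctan_zero]; linarith [hν.1]
    · rw [zero_div, Real.arctan_zero]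
  · -- M > 0
    -- first show σ * √(λMε) < π/2
    have hσω : σ * Real.sqrt (lam * M * ε) < Real.pi / 2 := by
      by_contra hcon
      push_neg at hcon
      set T : ℝ := max (Real.tan ν * (4*σ/Real.pi) + 1) 1 with hTdef
      have hT1 : (1:ℝ) ≤ T := le_max_right _ _
      have hTν : Real.tan ν * (4*σ/Real.pi) + 1 ≤ T := le_max_left _ _
      have htanν : 0 < Real.tan ν := Real.tan_pos_of_pos_of_lt_pi_div_two hν.1 hν.2
      set c : ℝ := Real.arctan T with hcdef
      have hc2 : c < Real.pi / 2 := Real.arctan_lt_pi_div_two T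
      have hc1 : Real.pi / 4 ≤ c := by
        rw [← Real.arctan_one]
        exact Real.arctan_strictMono.monotone hT1
      have hc0 : 0 < c := lt_of_lt_of_le (by positivity) hc1
      have htc : Real.tan c = T := Real.tan_arctan T
      set ε' : ℝ := (c/σ)^2 / (lam * M) with hε'def
      have hε'pos : 0 < ε' := by
        rw [hε'def]
        exact div_pos (pow_pos (div_pos hc0 hσ) 2) (mul_pos hlam hM)
      have hkey : lam * M * ε' = (c/σ)^2 := by
        rw [hε'def]
        field_simp [hlam.ne', hM.ne', hσ.ne']
      have hsq : Real.sqrt (lam * M * ε') = c/σ := by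
        rw [hkey, Real.sqrt_sq (div_nonneg hc0.le hσ.le)]
      have hε'ε : ε' < ε := by
        have h1 : c < σ * Real.sqrt (lam * M * ε) := lt_of_lt_of_le hc2 hcon
        have h2 : (c/σ)^2 < lam * M * ε := by
          have hcs : c/σ < Real.sqrt (lam * M * ε) := by
            rw [div_lt_iff₀ hσ]
            nlinarith
          have h0 : 0 ≤ c/σ := div_nonneg hc0.le hσ.le
          nlinarith [Real.sq_sqrt (mul_pos (mul_pos hlam hM) hε.1).le,
            Real.sqrt_nonneg (lam * M * ε)]
        rw [hε'def, div_lt_iff₀ (mul_pos hlam hM)]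
        nlinarith
      have hε'mem : ε' ∈ Ioo (0:ℝ) εhat := ⟨hε'pos, hε'ε.trans hε.2⟩
      have := hεcond ε' hε'mem
      rw [hsq] at this
      have hσc : σ * (c/σ) = c := by field_simp
      rw [hσc, htc] at this
      -- this : arctan (c/σ * T) < ν ; derive contradiction
      have hlb : Real.tan ν < c/σ * T := by
        have hTnn : (0:ℝ) ≤ Real.tan ν * (4*σ/Real.pi) + 1 := by
          have : (0:ℝ) ≤ Real.tan ν * (4*σ/Real.pi) :=
            mul_nonneg htanν.le (by positivity)
          linarith
        have h1 : Real.pi/4 * (Real.tan ν * (4*σ/Real.pi) + 1) ≤ c * T :=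
          mul_le_mul hc1 hTν hTnn (by linarith)
        have h2 : Real.pi/4 * (Real.tan ν * (4*σ/Real.pi) + 1)
            = Real.tan ν * σ + Real.pi/4 := by
          field_simp
        rw [div_mul_eq_mul_div, lt_div_iff₀ hσ]
        linarith
      have : ν < ν := by
        calc ν = Real.arctan (Real.tan ν) := (Real.arctan_tan (by linarith [hν.1, hπ]) hν.2).symm
        _ < Real.arctan (c/σ * T) := Real.arctan_strictMono hlb
        _ < ν := this
      exact absurd this (lt_irrefl ν)
    exact stmt3_core σ lam ν M ε δ a g hσ hlam hν hM hε.1 ⟨hδpos, hδ1⟩ ha0 haM haint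
      hgcont hgnn hgδ hσω (hεcond ε hε)
end

section
/- Let 0 < κ₃ < κ_T < 1, t₃ ∈ (τ,T), define λ** := (κ_T - κ₃)/(g₊(κ₃,κ_T) ∫_{t₃}^{T} A⁺(ξ,T) dξ) with A⁺(t,T) := ∫_t^T a⁺(ξ)dξ and g₊(κ₃,κ_T) := min_{s∈[κ₃,κ_T]} g(s) > 0, assuming ∫_{t₃}^{T} A⁺(ξ,T)dξ > 0, and let 0 < γ₃ ≤ (κ_T - κ₃)/(T - t₃). Then for every λ > λ**, the solution (x,y) of x' = y, y' = -λ a⁺(t) g(x) with terminal conditions x(T) = κ_T, y(T) = 0 satisfies x(t₃) < κ₃ and y(t₃) > γ₃. -/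
open MeasureTheory Set

/-- Lemma 2.5: for `λ > λ** = (κ_T-κ₃)/(g₊(κ₃,κ_T) ∫_{t₃}^T A⁺(ξ,T) dξ)` and
`0 < γ₃ ≤ (κ_T-κ₃)/(T-t₃)`, the solution of `x' = y, y' = -λ a⁺(t) g(x)` with
terminal data `x(T) = κ_T`, `y(T) = 0` satisfies `x(t₃) < κ₃` and `y(t₃) > γ₃`. -/
theorem stmt5 (τ T t₃ κ₃ κT γ₃ lam : ℝ) (a g x y : ℝ → ℝ)
    (hκ₃ : 0 < κ₃) (hκκ : κ₃ < κT) (hκT : κT < 1)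
    (ht₃ : t₃ ∈ Ioo τ T)
    (ha0 : ∀ t ∈ Icc τ T, 0 ≤ a t)
    (haint : IntegrableOn a (Icc τ T))
    (hApos : ∀ t ∈ Ico τ T, 0 < ∫ s in t..T, a s)
    (hgcont : Continuous g) (hgnn : ∀ s, 0 ≤ g s)
    (hg0 : g 0 = 0) (hg1 : g 1 = 0) (hgpos : ∀ s : ℝ, 0 < s → s < 1 → 0 < g s)
    (hgmin : 0 < sInf (g '' Icc κ₃ κT))
    (hIpos : 0 < ∫ t in t₃..T, (∫ s in t..T, a s))
    (hγpos : 0 < γ₃) (hγle : γ₃ ≤ (κT - κ₃) / (T - t₃))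
    (hlam : lam >
      (κT - κ₃) / (sInf (g '' Icc κ₃ κT) * ∫ t in t₃..T, (∫ s in t..T, a s)))
    (hcx : ContinuousOn x (Icc τ T)) (hcy : ContinuousOn y (Icc τ T))
    (hx : ∀ t ∈ Icc τ T, x t = x T + ∫ s in T..t, y s)
    (hy : ∀ t ∈ Icc τ T, y t = y T - lam * ∫ s in T..t, a s * g (x s))
    (hxT : x T = κT) (hyT : y T = 0) :
    x t₃ < κ₃ ∧ γ₃ < y t₃ := by
  obtain ⟨hτt₃, ht₃T⟩ := ht₃
  have hτT : τ < T := hτt₃.trans ht₃T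
  set m := sInf (g '' Set.Icc κ₃ κT) with hm
  set I := ∫ t in t₃..T, (∫ s in t..T, a s) with hI
  have hlam0 : 0 < lam :=
    lt_of_le_of_lt (le_of_lt (div_pos (by linarith) (mul_pos hgmin hIpos))) hlam
  have ht₃m : t₃ ∈ Set.Icc τ T := ⟨hτt₃.le, ht₃T.le⟩
  have hTm : T ∈ Set.Icc τ T := ⟨hτT.le, le_rfl⟩
  -- interval integrability
  have hsub : ∀ s t : ℝ, s ∈ Set.Icc τ T → t ∈ Set.Icc τ T →
      Set.uIcc s t ⊆ Set.Icc τ T := fun s t hs ht => Set.uIcc_subset_Icc hs ht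
  have hyint : ∀ s t : ℝ, s ∈ Set.Icc τ T → t ∈ Set.Icc τ T →
      IntervalIntegrable y volume s t := fun s t hs ht =>
    (hcy.mono (hsub s t hs ht)).intervalIntegrable
  have hagx : IntegrableOn (fun s => a s * g (x s)) (Set.Icc τ T) :=
    haint.mul_continuousOn (hgcont.comp_continuousOn hcx) isCompact_Icc
  have hagxint : ∀ s t : ℝ, s ∈ Set.Icc τ T → t ∈ Set.Icc τ T →
      IntervalIntegrable (fun s => a s * g (x s)) volume s t := fun s t hs ht =>
    (hagx.mono_set (hsub s t hs ht)).intervalIntegrable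
  -- value of y
  have hyval : ∀ t ∈ Set.Icc τ T, y t = lam * ∫ s in t..T, a s * g (x s) := by
    intro t ht
    rw [hy t ht, hyT, intervalIntegral.integral_symm t T]
    ring
  -- y is nonnegative on [τ, T]
  have hynn : ∀ t ∈ Set.Icc τ T, 0 ≤ y t := by
    intro t ht
    rw [hyval t ht]
    refine mul_nonneg hlam0.le (intervalIntegral.integral_nonneg ht.2 ?_)
    intro u hu
    exact mul_nonneg (ha0 u ⟨ht.1.trans hu.1, hu.2⟩) (hgnn _)
  -- x increments
  have hxdiff : ∀ s t : ℝ, s ∈ Set.Icc τ T → t ∈ Set.Icc τ T →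
      x t - x s = ∫ u in s..t, y u := by
    intro s t hs ht
    rw [hx t ht, hx s hs]
    have h1 := intervalIntegral.integral_add_adjacent_intervals
      (hyint s T hs hTm) (hyint T t hTm ht)
    rw [intervalIntegral.integral_symm T s] at h1
    linarith [h1]
  have hmono : ∀ s t : ℝ, s ∈ Set.Icc τ T → t ∈ Set.Icc τ T → s ≤ t → x s ≤ x t := by
    intro s t hs ht hst
    have h1 := hxdiff s t hs ht
    have h2 : 0 ≤ ∫ u in s..t, y u :=
      intervalIntegral.integral_nonneg hst fun u hu =>
        hynn u ⟨hs.1.trans hu.1, hu.2.trans ht.2⟩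
    linarith
  -- continuity of the primitive A t = ∫ s in t..T, a s
  have hAcont : ContinuousOn (fun t => ∫ s in t..T, a s) (Set.Icc τ T) := by
    have := intervalIntegral.continuousOn_primitive_interval_left
      (a := τ) (b := T) (μ := volume) (f := a) (by rwa [Set.uIcc_of_le hτT.le])
    rwa [Set.uIcc_of_le hτT.le] at this
  -- main claim : x t₃ < κ₃
  have hx3 : x t₃ < κ₃ := by
    by_contra hcon
    push_neg at hcon
    have hxmem : ∀ t ∈ Set.Icc t₃ T, x t ∈ Set.Icc κ₃ κT := by
      intro t ht
      have ht' : t ∈ Set.Icc τ T := ⟨hτt₃.le.trans ht.1, ht.2⟩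
      refine ⟨hcon.trans (hmono t₃ t ht₃m ht' ht.1), ?_⟩
      have h := hmono t T ht' hTm ht.2
      rwa [hxT] at h
    have hybound : ∀ t ∈ Set.Icc t₃ T, lam * m * (∫ s in t..T, a s) ≤ y t := by
      intro t ht
      have ht' : t ∈ Set.Icc τ T := ⟨hτt₃.le.trans ht.1, ht.2⟩
      rw [hyval t ht']
      have hcomp : (∫ s in t..T, m * a s) ≤ ∫ s in t..T, a s * g (x s) := by
        refine intervalIntegral.integral_mono_on ht.2
          (((haint.mono_set (hsub t T ht' hTm)).intervalIntegrable).const_mul m)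
          (hagxint t T ht' hTm) ?_
        intro u hu
        have hxm := hxmem u ⟨ht.1.trans hu.1, hu.2⟩
        have hmle : m ≤ g (x u) := csInf_le ⟨0, fun v ⟨w, _, hw⟩ => hw ▸ hgnn w⟩
          ⟨x u, hxm, rfl⟩
        have ha' : 0 ≤ a u := ha0 u ⟨ht'.1.trans hu.1, hu.2⟩
        calc m * a u = a u * m := mul_comm _ _
          _ ≤ a u * g (x u) := mul_le_mul_of_nonneg_left hmle ha'
      rw [intervalIntegral.integral_const_mul] at hcomp
      calc lam * m * (∫ s in t..T, a s) = lam * (m * ∫ s in t..T, a s) := by ring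
        _ ≤ lam * ∫ s in t..T, a s * g (x s) :=
            mul_le_mul_of_nonneg_left hcomp hlam0.le
    have hint1 : IntervalIntegrable (fun t => lam * m * (∫ s in t..T, a s)) volume t₃ T :=
      (((hAcont.mono (hsub t₃ T ht₃m hTm)).intervalIntegrable).const_mul (lam * m))
    have hcomp2 : (∫ t in t₃..T, lam * m * (∫ s in t..T, a s)) ≤ ∫ t in t₃..T, y t :=
      intervalIntegral.integral_mono_on ht₃T.le hint1 (hyint t₃ T ht₃m hTm) hybound
    rw [intervalIntegral.integral_const_mul] at hcomp2
    have hxd := hxdiff t₃ T ht₃m hTm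
    rw [hxT] at hxd
    rw [gt_iff_lt, div_lt_iff₀ (mul_pos hgmin hIpos)] at hlam
    nlinarith
  refine ⟨hx3, ?_⟩
  -- y is antitone on [t₃, T]
  have hyanti : ∀ s ∈ Set.Icc t₃ T, y s ≤ y t₃ := by
    intro s hs
    have hs' : s ∈ Set.Icc τ T := ⟨hτt₃.le.trans hs.1, hs.2⟩
    rw [hyval s hs', hyval t₃ ht₃m]
    have h1 := intervalIntegral.integral_add_adjacent_intervals
      (hagxint t₃ s ht₃m hs') (hagxint s T hs' hTm)
    have h2 : 0 ≤ ∫ u in t₃..s, a u * g (x u) :=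
      intervalIntegral.integral_nonneg hs.1 fun u hu =>
        mul_nonneg (ha0 u ⟨hτt₃.le.trans hu.1, hu.2.trans hs.2⟩) (hgnn _)
    nlinarith
  have hbound : (∫ t in t₃..T, y t) ≤ y t₃ * (T - t₃) := by
    have h := intervalIntegral.integral_mono_on ht₃T.le (hyint t₃ T ht₃m hTm)
      (_root_.intervalIntegrable_const (c := y t₃)) hyanti
    rwa [intervalIntegral.integral_const, smul_eq_mul, mul_comm] at h
  have hxd := hxdiff t₃ T ht₃m hTm
  rw [hxT] at hxd
  have hTt₃ : 0 < T - t₃ := by linarith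
  rw [le_div_iff₀ hTt₃] at hγle
  have h3 : γ₃ * (T - t₃) < y t₃ * (T - t₃) := by nlinarith
  exact lt_of_mul_lt_mul_right h3 hTt₃.le
end

section
/- Let 0 < κ_σ < κ₂ < 1 and ω_σ > 0. Let σ < t₂ ≤ min{σ + κ_σ/(2ω_σ), τ} and 0 < ω ≤ (κ₂ - κ_σ)/(t₂ - σ). Define μ* := (κ₂ - κ_σ + (t₂ - σ)ω_σ)/(g₊(κ_σ/2, κ₂) ∫_σ^{t₂} A⁻(σ,ξ)dξ), where A⁻(σ,t) := ∫_σ^t a⁻(ξ)dξ > 0 for t ∈ (σ,τ] and g₊(κ_σ/2,κ₂) := min_{s∈[κ_σ/2,κ₂]} g(s) > 0. Then for every μ > μ*, any solution (x,y) of x' = y, y' = μ a⁻(t) g(x) on [σ,τ] with x(σ) = κ_σ and y(σ) ≥ -ω_σ satisfies x(t₂) > κ₂ and y(t₂) > ω. -/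
open MeasureTheory Set

set_option maxHeartbeats 800000 in
/-- Lemma 2.7: for `μ > μ* = (κ₂-κ_σ+(t₂-σ)ω_σ)/(g₊(κ_σ/2,κ₂) ∫_σ^{t₂} A⁻(σ,ξ)dξ)`,
any solution of `x' = y, y' = μ a⁻(t) g(x)` on `[σ,τ]` with `x(σ) = κ_σ`,
`y(σ) ≥ -ω_σ` satisfies `x(t₂) > κ₂` and `y(t₂) > ω`. -/
theorem stmt7 (σ τ t₂ κσ κ₂ ωσ ω μ : ℝ) (a g x y : ℝ → ℝ)
    (hκσ : 0 < κσ) (hκκ : κσ < κ₂) (hκ₂ : κ₂ < 1) (hωσ : 0 < ωσ)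
    (hστ : σ < τ)
    (ht₂l : σ < t₂) (ht₂u : t₂ ≤ min (σ + κσ / (2 * ωσ)) τ)
    (hωpos : 0 < ω) (hωle : ω ≤ (κ₂ - κσ) / (t₂ - σ))
    (ha0 : ∀ t ∈ Icc σ τ, 0 ≤ a t)
    (haint : IntegrableOn a (Icc σ τ))
    (hApos : ∀ t ∈ Ioc σ τ, 0 < ∫ s in σ..t, a s)
    (hgcont : Continuous g) (hgnn : ∀ s, 0 ≤ g s)
    (hg0 : g 0 = 0) (hg1 : g 1 = 0) (hgpos : ∀ s : ℝ, 0 < s → s < 1 → 0 < g s)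
    (hgmin : 0 < sInf (g '' Icc (κσ / 2) κ₂))
    (hIpos : 0 < ∫ t in σ..t₂, (∫ s in σ..t, a s))
    (hμ : μ >
      (κ₂ - κσ + (t₂ - σ) * ωσ) / (sInf (g '' Icc (κσ / 2) κ₂) * ∫ t in σ..t₂, (∫ s in σ..t, a s)))
    (hcx : ContinuousOn x (Icc σ τ)) (hcy : ContinuousOn y (Icc σ τ))
    (hx : ∀ t ∈ Icc σ τ, x t = x σ + ∫ s in σ..t, y s)
    (hy : ∀ t ∈ Icc σ τ, y t = y σ + μ * ∫ s in σ..t, a s * g (x s))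
    (hxσ : x σ = κσ) (hyσ : -ωσ ≤ y σ) :
    κ₂ < x t₂ ∧ ω < y t₂ := by
  obtain ⟨ht₂a, ht₂τ⟩ := le_min_iff.mp ht₂u
  set gp := sInf (g '' Icc (κσ / 2) κ₂) with hgp
  set I := (∫ t in σ..t₂, (∫ s in σ..t, a s)) with hIdef
  have hμpos : 0 < μ := lt_trans (div_pos (by nlinarith) (mul_pos hgmin hIpos)) hμ
  -- y is nondecreasing on [σ, τ]
  have hmono : ∀ s t : ℝ, σ ≤ s → s ≤ t → t ≤ τ → y s ≤ y t := by
    intro s t hs hst htτ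
    have hsτ : s ≤ τ := hst.trans htτ
    have hσt : σ ≤ t := hs.trans hst
    rw [hy s ⟨hs, hsτ⟩, hy t ⟨hσt, htτ⟩]
    have hsub : (∫ u in σ..t, a u * g (x u)) - (∫ u in σ..s, a u * g (x u))
        = ∫ u in s..t, a u * g (x u) := by
      rw [intervalIntegral.integral_interval_sub_left] <;>
      · apply IntegrableOn.intervalIntegrable
        apply (haint.mul_continuousOn (hgcont.comp_continuousOn hcx) isCompact_Icc).mono_set
        rw [uIcc_of_le (by linarith)]
        exact Icc_subset_Icc (by linarith) (by linarith)
    have h0 : 0 ≤ ∫ u in s..t, a u * g (x u) := by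
      apply intervalIntegral.integral_nonneg hst
      intro u hu
      exact mul_nonneg (ha0 u ⟨hs.trans hu.1, hu.2.trans htτ⟩) (hgnn _)
    nlinarith
  have hyI : ∀ t : ℝ, σ ≤ t → t ≤ τ → IntervalIntegrable y volume σ t := by
    intro t h1 h2
    exact ((hcy.mono (Icc_subset_Icc le_rfl h2)).mono (by rw [uIcc_of_le h1])).intervalIntegrable
  -- lower bound for x on [σ, t₂]
  have hxlow : ∀ t ∈ Icc σ t₂, κσ / 2 ≤ x t := by
    intro t ht
    have htτ : t ≤ τ := ht.2.trans ht₂τ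
    rw [hx t ⟨ht.1, htτ⟩, hxσ]
    have hint : (t - σ) * y σ ≤ ∫ s in σ..t, y s := by
      have := intervalIntegral.integral_mono_on ht.1
        (intervalIntegrable_const (c := y σ)) (hyI t ht.1 htτ)
        (fun u hu => hmono σ u le_rfl hu.1 (hu.2.trans htτ))
      simpa using this
    have htb : (t - σ) * ωσ ≤ κσ / 2 := by
      have h1 : t - σ ≤ κσ / (2 * ωσ) := by
        have := ht.2.trans ht₂a; linarith
      calc (t - σ) * ωσ ≤ κσ / (2 * ωσ) * ωσ :=
            mul_le_mul_of_nonneg_right h1 hωσ.le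
        _ = κσ / 2 := by field_simp
    have : (t - σ) * (-ωσ) ≤ (t - σ) * y σ :=
      mul_le_mul_of_nonneg_left hyσ (by linarith [ht.1])
    nlinarith
  -- the main claim : x t₂ > κ₂
  have hbdd : BddBelow (g '' Icc (κσ / 2) κ₂) :=
    ⟨0, fun v hv => by obtain ⟨u, _, rfl⟩ := hv; exact hgnn u⟩
  have hxt₂ : κ₂ < x t₂ := by
    by_contra hcon
    push_neg at hcon
    -- x ≤ κ₂ on [σ, t₂]
    have hub : ∀ t ∈ Icc σ t₂, x t ≤ κ₂ := by
      intro t ht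
      by_contra hxt
      push_neg at hxt
      have htτ : t ≤ τ := ht.2.trans ht₂τ
      rcases le_or_gt 0 (y t) with hyt | hyt
      · -- then x is nondecreasing after t, so x t₂ ≥ x t > κ₂
        have hsub : x t₂ - x t = ∫ s in t..t₂, y s := by
          rw [hx t₂ ⟨ht₂l.le, ht₂τ⟩, hx t ⟨ht.1, htτ⟩]
          rw [show x σ + (∫ s in σ..t₂, y s) - (x σ + ∫ s in σ..t, y s)
              = (∫ s in σ..t₂, y s) - ∫ s in σ..t, y s by ring]
          rw [intervalIntegral.integral_interval_sub_left (hyI t₂ ht₂l.le ht₂τ)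
            (hyI t ht.1 htτ)]
        have h0 : 0 ≤ ∫ s in t..t₂, y s := by
          apply intervalIntegral.integral_nonneg ht.2
          intro u hu
          exact hyt.trans (hmono t u ht.1 hu.1 (hu.2.trans ht₂τ))
        linarith
      · -- then y ≤ y t < 0 before t, so x t ≤ κσ
        have hint : (∫ s in σ..t, y s) ≤ (t - σ) * y t := by
          have := intervalIntegral.integral_mono_on ht.1 (hyI t ht.1 htτ)
            (intervalIntegrable_const (c := y t))
            (fun u hu => hmono u t hu.1 hu.2 htτ)
          simpa using this
        have : x t ≤ κσ := by
          rw [hx t ⟨ht.1, htτ⟩, hxσ]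
          nlinarith [ht.1]
        linarith
    -- pointwise bound g (x s) ≥ gp on [σ, t₂]
    have hgx : ∀ s ∈ Icc σ t₂, gp ≤ g (x s) := by
      intro s hs
      exact csInf_le hbdd ⟨x s, ⟨hxlow s hs, hub s hs⟩, rfl⟩
    -- lower bound for y on [σ, t₂]
    have hylow : ∀ t ∈ Icc σ t₂, -ωσ + μ * (gp * ∫ s in σ..t, a s) ≤ y t := by
      intro t ht
      have htτ : t ≤ τ := ht.2.trans ht₂τ
      rw [hy t ⟨ht.1, htτ⟩]
      have haii : IntervalIntegrable a volume σ t :=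
        (haint.mono_set (by rw [uIcc_of_le ht.1]; exact Icc_subset_Icc le_rfl htτ)).intervalIntegrable
      have hgxi : IntervalIntegrable (fun s => a s * g (x s)) volume σ t := by
        apply IntegrableOn.intervalIntegrable
        apply (haint.mul_continuousOn (hgcont.comp_continuousOn hcx) isCompact_Icc).mono_set
        rw [uIcc_of_le ht.1]; exact Icc_subset_Icc le_rfl htτ
      have hint : gp * (∫ s in σ..t, a s) ≤ ∫ s in σ..t, a s * g (x s) := by
        rw [← intervalIntegral.integral_const_mul]
        apply intervalIntegral.integral_mono_on ht.1 (haii.const_mul gp) hgxi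
        intro u hu
        have hau : 0 ≤ a u := ha0 u ⟨hu.1, hu.2.trans htτ⟩
        have := hgx u ⟨hu.1, hu.2.trans ht.2⟩
        nlinarith
      have := mul_le_mul_of_nonneg_left hint hμpos.le
      linarith
    -- integrate: x t₂ > κ₂
    have hAint : IntervalIntegrable (fun t => ∫ s in σ..t, a s) volume σ t₂ := by
      apply ContinuousOn.intervalIntegrable
      rw [uIcc_of_le ht₂l.le]
      have : ContinuousOn (fun t => ∫ s in σ..t, a s) (uIcc σ τ) :=
        intervalIntegral.continuousOn_primitive_interval
          (by rw [uIcc_of_le hστ.le]; exact haint)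
      exact this.mono (by rw [uIcc_of_le hστ.le]; exact Icc_subset_Icc le_rfl ht₂τ)
    have hint2 : (∫ t in σ..t₂, (-ωσ + μ * (gp * ∫ s in σ..t, a s))) ≤ ∫ s in σ..t₂, y s := by
      apply intervalIntegral.integral_mono_on ht₂l.le
        (intervalIntegrable_const.add (((hAint.const_mul gp).const_mul μ)))
        (hyI t₂ ht₂l.le ht₂τ)
      exact fun u hu => hylow u hu
    have hcalc : (∫ t in σ..t₂, (-ωσ + μ * (gp * ∫ s in σ..t, a s)))
        = (t₂ - σ) * (-ωσ) + μ * (gp * I) := by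
      rw [intervalIntegral.integral_add intervalIntegrable_const
        ((hAint.const_mul gp).const_mul μ)]
      rw [intervalIntegral.integral_const_mul, intervalIntegral.integral_const_mul,
        intervalIntegral.integral_const]
      simp only [smul_eq_mul]
      rfl
    have hμI : κ₂ - κσ + (t₂ - σ) * ωσ < μ * (gp * I) := by
      have := (div_lt_iff₀ (mul_pos hgmin hIpos)).mp hμ
      linarith
    have : κ₂ < x t₂ := by
      rw [hx t₂ ⟨ht₂l.le, ht₂τ⟩, hxσ]
      rw [hcalc] at hint2
      nlinarith
    linarith
  refine ⟨hxt₂, ?_⟩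
  -- y t₂ > ω
  have hint : (∫ s in σ..t₂, y s) ≤ (t₂ - σ) * y t₂ := by
    have := intervalIntegral.integral_mono_on ht₂l.le (hyI t₂ ht₂l.le ht₂τ)
      (intervalIntegrable_const (c := y t₂))
      (fun u hu => hmono u t₂ hu.1 hu.2 ht₂τ)
    simpa using this
  have hx2 : x t₂ = κσ + ∫ s in σ..t₂, y s := by rw [hx t₂ ⟨ht₂l.le, ht₂τ⟩, hxσ]
  have hω : ω * (t₂ - σ) ≤ κ₂ - κσ := by
    have := mul_le_mul_of_nonneg_right hωle (by linarith : (0:ℝ) ≤ t₂ - σ)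
    rwa [div_mul_cancel₀] at this
    linarith
  nlinarith
end

section
/- Let λ > 0, let 0 ≤ a⁺ ∈ L^∞(0,σ), and let g : ℝ → ℝ⁺ be continuous with g(s) ≤ εs for all s ∈ [0,δ] (some ε, δ > 0) and g = 0 for s ≤ 0. Suppose (x,y) solves x' = y, y' = -λ a⁺(t)g(x) on [0,σ] with x(0) = κ ∈ (0,δ], y(0) = 0, and x(t) > 0 on [0,σ]. Writing (x,y) = (ρ cos θ, ρ sin θ) with θ(0) = 0, the angular coordinate satisfies θ(t) ∈ [-π/2, 0] and |θ(t)| ≤ arctan(√(λ‖a⁺‖_∞ ε) · tan(σ√(λ‖a⁺‖_∞ ε))) for all t ∈ [0,σ], provided σ√(λ‖a⁺‖_∞ε) < π/2. -/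
open MeasureTheory Set

lemma triangle_swap' {t : ℝ} (ht : 0 ≤ t) {h f : ℝ → ℝ}
    (hh : IntegrableOn h (Icc 0 t)) (hf : Continuous f) :
    ∫ s in (0:ℝ)..t, f s * ∫ r in (0:ℝ)..s, h r
      = ∫ r in (0:ℝ)..t, h r * ∫ s in r..t, f s := by
  have hhIoc : IntegrableOn h (Ioc 0 t) := hh.mono_set Ioc_subset_Icc_self
  set ν := volume.restrict (Ioc (0:ℝ) t) with hν
  obtain ⟨C, hC⟩ : ∃ C, ∀ s ∈ Icc (0:ℝ) t, ‖f s‖ ≤ C :=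
    (isCompact_Icc.exists_bound_of_continuousOn hf.continuousOn)
  set K : ℝ → ℝ → ℝ := fun s r => if r ≤ s then f s * h r else 0 with hK
  have hmeas : AEStronglyMeasurable (Function.uncurry K) (ν.prod ν) := by
    have h1 : AEStronglyMeasurable (fun p : ℝ × ℝ => f p.1 * h p.2) (ν.prod ν) :=
      ((hf.comp continuous_fst).aestronglyMeasurable).mul
        (hhIoc.aestronglyMeasurable.comp_snd)
    have h2 : MeasurableSet {p : ℝ × ℝ | p.2 ≤ p.1} :=
      measurableSet_le measurable_snd measurable_fst
    have : Function.uncurry K =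
        Set.indicator {p : ℝ × ℝ | p.2 ≤ p.1} (fun p => f p.1 * h p.2) := by
      ext p
      by_cases hp : p.2 ≤ p.1 <;>
        simp [Function.uncurry, hK, hp, Set.indicator_of_mem, Set.indicator_of_notMem]
    rw [this]
    exact h1.indicator h2
  have hint : Integrable (Function.uncurry K) (ν.prod ν) := by
    refine Integrable.mono' (g := fun p : ℝ × ℝ => |C| * |h p.2|) ?_ hmeas ?_
    · exact (integrable_const (μ := ν) _).mul_prod hhIoc.abs
    · have hmem : ∀ᵐ p ∂(ν.prod ν), p ∈ Ioc (0:ℝ) t ×ˢ Ioc (0:ℝ) t := by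
        rw [hν, Measure.prod_restrict]
        exact ae_restrict_mem ((measurableSet_Ioc).prod measurableSet_Ioc)
      filter_upwards [hmem] with p hp
      rcases hp with ⟨hp1, hp2⟩
      by_cases hle : p.2 ≤ p.1
      · simp only [Function.uncurry, hK, if_pos hle]
        rw [Real.norm_eq_abs, abs_mul]
        have := hC p.1 (Ioc_subset_Icc_self hp1)
        calc |f p.1| * |h p.2| ≤ C * |h p.2| :=
              mul_le_mul_of_nonneg_right (by simpa using this) (abs_nonneg _)
          _ ≤ |C| * |h p.2| := mul_le_mul_of_nonneg_right (le_abs_self C) (abs_nonneg _)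
      · simp only [Function.uncurry, hK, if_neg hle, norm_zero]
        exact mul_nonneg (abs_nonneg _) (abs_nonneg _)
  have hswap : ∫ s, (∫ r, K s r ∂ν) ∂ν = ∫ r, (∫ s, K s r ∂ν) ∂ν :=
    integral_integral_swap hint
  have hL : ∫ s in (0:ℝ)..t, f s * ∫ r in (0:ℝ)..s, h r = ∫ s, (∫ r, K s r ∂ν) ∂ν := by
    rw [intervalIntegral.integral_of_le ht]
    refine setIntegral_congr_fun measurableSet_Ioc (fun s hs => ?_)
    have : (∫ r, K s r ∂ν) = f s * ∫ r in (0:ℝ)..s, h r := by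
      have : (fun r => K s r) = Set.indicator (Iic s) (fun r => f s * h r) := by
        ext r; by_cases hr : r ≤ s <;>
          simp [hK, hr, Set.indicator_of_mem, Set.indicator_of_notMem, mem_Iic]
      rw [this, hν, integral_indicator measurableSet_Iic, Measure.restrict_restrict measurableSet_Iic]
      have hset : Iic s ∩ Ioc 0 t = Ioc 0 s := by
        ext r; simp only [mem_inter_iff, mem_Iic, mem_Ioc]
        exact ⟨fun ⟨h1, h2, _⟩ => ⟨h2, h1⟩, fun ⟨h1, h2⟩ => ⟨h2, h1, h2.trans hs.2⟩⟩
      rw [hset, intervalIntegral.integral_of_le hs.1.le, integral_const_mul]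
    rw [this]
  have hR : ∫ r in (0:ℝ)..t, h r * ∫ s in r..t, f s = ∫ r, (∫ s, K s r ∂ν) ∂ν := by
    rw [intervalIntegral.integral_of_le ht]
    refine setIntegral_congr_fun measurableSet_Ioc (fun r hr => ?_)
    have : (∫ s, K s r ∂ν) = h r * ∫ s in r..t, f s := by
      have : (fun s => K s r) = Set.indicator (Ici r) (fun s => f s * h r) := by
        ext s; by_cases hs : r ≤ s <;>
          simp [hK, hs, Set.indicator_of_mem, Set.indicator_of_notMem, mem_Ici]
      rw [this, hν, integral_indicator measurableSet_Ici, Measure.restrict_restrict measurableSet_Ici]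
      have hset : Ici r ∩ Ioc 0 t = Icc r t := by
        ext s; simp only [mem_inter_iff, mem_Ici, mem_Ioc, mem_Icc]
        exact ⟨fun ⟨h1, _, h3⟩ => ⟨h1, h3⟩, fun ⟨h1, h2⟩ => ⟨h1, hr.1.trans_le h1, h2⟩⟩
      rw [hset, integral_Icc_eq_integral_Ioc, ← intervalIntegral.integral_of_le hr.2,
        show (fun s => f s * h r) = fun s => h r * f s from funext fun s => mul_comm _ _]
      rw [intervalIntegral.integral_const_mul]
    rw [this]
  rw [hL, hswap, ← hR]

/-- Quantitative angular estimate (heart of Lemma 2.3): if `(x,y)` solves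
`x' = y, y' = -λ a⁺(t) g(x)` on `[0,σ]` with `x(0) = κ ∈ (0,δ]`, `y(0) = 0`,
`x > 0` on `[0,σ]`, `0 ≤ a⁺ ≤ M`, `g(s) ≤ εs` on `[0,δ]`, `g = 0` for `s ≤ 0`,
then in polar coordinates `(x,y) = (ρ cos θ, ρ sin θ)` with `θ(0) = 0` one has
`θ(t) ∈ [-π/2,0]` and `|θ(t)| ≤ arctan(√(λMε) tan(σ√(λMε)))` on `[0,σ]`,
provided `σ√(λMε) < π/2`. -/

theorem stmt17 (σ lam ε δ κ M : ℝ) (a g x y ρ θ : ℝ → ℝ)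
    (hσ : 0 < σ) (hlam : 0 < lam) (hε : 0 < ε) (hδ : 0 < δ)
    (ha0 : ∀ t ∈ Icc 0 σ, 0 ≤ a t) (haM : ∀ t ∈ Icc 0 σ, a t ≤ M)
    (haint : IntegrableOn a (Icc 0 σ))
    (hgcont : Continuous g) (hgnn : ∀ s, 0 ≤ g s)
    (hgε : ∀ s ∈ Icc (0:ℝ) δ, g s ≤ ε * s)
    (hgneg : ∀ s : ℝ, s ≤ 0 → g s = 0)
    (hκ : κ ∈ Ioc 0 δ)
    (hcx : ContinuousOn x (Icc 0 σ)) (hcy : ContinuousOn y (Icc 0 σ))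
    (hx : ∀ t ∈ Icc 0 σ, x t = κ + ∫ s in (0:ℝ)..t, y s)
    (hy : ∀ t ∈ Icc 0 σ, y t = -lam * ∫ s in (0:ℝ)..t, a s * g (x s))
    (hxpos : ∀ t ∈ Icc 0 σ, 0 < x t)
    (hθcont : ContinuousOn θ (Icc 0 σ)) (hθ0 : θ 0 = 0)
    (hpolar : ∀ t ∈ Icc 0 σ,
      0 < ρ t ∧ x t = ρ t * Real.cos (θ t) ∧ y t = ρ t * Real.sin (θ t))
    (hsmall : σ * Real.sqrt (lam * M * ε) < Real.pi / 2) :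
    ∀ t ∈ Icc (0:ℝ) σ,
      θ t ∈ Icc (-(Real.pi / 2)) 0 ∧
      |θ t| ≤ Real.arctan (Real.sqrt (lam * M * ε) *
        Real.tan (σ * Real.sqrt (lam * M * ε))) := by
  have hM : 0 ≤ M := le_trans (ha0 0 ⟨le_refl 0, hσ.le⟩) (haM 0 ⟨le_refl 0, hσ.le⟩)
  set c := Real.sqrt (lam * M * ε) with hcdef
  have hc0 : 0 ≤ c := Real.sqrt_nonneg _
  have hc2 : c * c = lam * M * ε := Real.mul_self_sqrt (by positivity)
  set H : ℝ → ℝ := fun s => a s * g (x s) with hHdef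
  have hsub : ∀ t ∈ Icc (0:ℝ) σ, Icc (0:ℝ) t ⊆ Icc 0 σ :=
    fun t ht => Icc_subset_Icc le_rfl ht.2
  -- integrability of H
  have hgx_cont : ContinuousOn (fun s => g (x s)) (Icc 0 σ) := hgcont.comp_continuousOn hcx
  have hH_int : IntegrableOn H (Icc 0 σ) := by
    obtain ⟨C, hC⟩ := isCompact_Icc.exists_bound_of_continuousOn hgx_cont
    have h1 : IntegrableOn (fun s => g (x s) * a s) (Icc 0 σ) := by
      refine Integrable.bdd_mul (c := C) haint
        (hgx_cont.aestronglyMeasurable measurableSet_Icc) ?_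
      filter_upwards [ae_restrict_mem measurableSet_Icc] with s hs using hC s hs
    exact h1.congr_fun (fun s _ => mul_comm _ _) measurableSet_Icc
  have hH_ii : ∀ t ∈ Icc (0:ℝ) σ, IntervalIntegrable H volume 0 t := fun t ht =>
    (intervalIntegrable_iff_integrableOn_Icc_of_le ht.1).2 (hH_int.mono_set (hsub t ht))
  have hy_ii : ∀ t ∈ Icc (0:ℝ) σ, IntervalIntegrable y volume 0 t := fun t ht =>
    (hcy.mono (hsub t ht)).intervalIntegrable_of_Icc ht.1
  have hH_nn : ∀ s ∈ Icc (0:ℝ) σ, 0 ≤ H s := fun s hs => mul_nonneg (ha0 s hs) (hgnn _)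
  have hynp : ∀ t ∈ Icc (0:ℝ) σ, y t ≤ 0 := by
    intro t ht
    rw [hy t ht]
    have h1 : 0 ≤ ∫ s in (0:ℝ)..t, H s :=
      intervalIntegral.integral_nonneg ht.1 (fun u hu => hH_nn u ⟨hu.1, hu.2.trans ht.2⟩)
    nlinarith
  have hxκ : ∀ t ∈ Icc (0:ℝ) σ, x t ≤ κ := by
    intro t ht
    rw [hx t ht]
    have h2 : 0 ≤ ∫ s in (0:ℝ)..t, -y s :=
      intervalIntegral.integral_nonneg ht.1
        (fun u hu => neg_nonneg.2 (hynp u ⟨hu.1, hu.2.trans ht.2⟩))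
    rw [intervalIntegral.integral_neg] at h2
    linarith
  have hgxle : ∀ s ∈ Icc (0:ℝ) σ, g (x s) ≤ ε * x s := fun s hs =>
    hgε _ ⟨(hxpos s hs).le, (hxκ s hs).trans hκ.2⟩
  have hHle : ∀ s ∈ Icc (0:ℝ) σ, lam * H s ≤ (c * c) * x s := by
    intro s hs
    have h1 : a s * g (x s) ≤ M * (ε * x s) :=
      mul_le_mul (haM s hs) (hgxle s hs) (hgnn _) hM
    calc lam * H s ≤ lam * (M * (ε * x s)) := by
          exact mul_le_mul_of_nonneg_left h1 hlam.le
      _ = (c * c) * x s := by rw [hc2]; ring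
  have hcos : ∀ u : ℝ, 0 ≤ u → u ≤ σ → 0 < Real.cos (c * u) := by
    intro u hu1 hu2
    apply Real.cos_pos_of_mem_Ioo
    constructor
    · have := Real.pi_div_two_pos
      have : 0 ≤ c * u := mul_nonneg hc0 hu1
      linarith [Real.pi_div_two_pos]
    · have h1 : c * u ≤ c * σ := mul_le_mul_of_nonneg_left hu2 hc0
      have h2 : c * σ = σ * c := mul_comm _ _
      linarith
  have hsinint : ∀ r t : ℝ, (∫ s in r..t, c * Real.sin (c * s))
      = Real.cos (c * r) - Real.cos (c * t) := by
    intro r t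
    have hd : ∀ s : ℝ, HasDerivAt (fun u : ℝ => -Real.cos (c * u)) (c * Real.sin (c * s)) s := by
      intro s
      have h1 : HasDerivAt (fun u : ℝ => c * u) c s := by
        simpa using (hasDerivAt_id s).const_mul c
      have h2 := ((Real.hasDerivAt_cos (c * s)).comp s h1).neg
      simpa [Function.comp_def, mul_comm, Pi.neg_def] using h2
    rw [intervalIntegral.integral_eq_sub_of_hasDerivAt (fun s _ => hd s)
      ((continuous_const.mul (Real.continuous_sin.comp (continuous_const.mul continuous_id))).intervalIntegrable r t)]
    ring
  -- interval integrability of products with bounded continuous functions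
  have hHcos_ii : ∀ t ∈ Icc (0:ℝ) σ, IntervalIntegrable (fun s => H s * Real.cos (c * s)) volume 0 t := by
    intro t ht
    refine (intervalIntegrable_iff_integrableOn_Icc_of_le ht.1).2 ?_
    have h1 : IntegrableOn (fun s => Real.cos (c * s) * H s) (Icc 0 t) := by
      refine Integrable.bdd_mul (c := 1) (hH_int.mono_set (hsub t ht))
        ((Real.continuous_cos.comp (continuous_const.mul continuous_id)).aestronglyMeasurable) ?_
      exact Filter.Eventually.of_forall (fun s => by simpa using Real.abs_cos_le_one (c * s))
    exact h1.congr_fun (fun s _ => mul_comm _ _) measurableSet_Icc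
  -- Identity A
  have hA : ∀ t ∈ Icc (0:ℝ) σ, y t * Real.cos (c * t) =
      -lam * (∫ s in (0:ℝ)..t, H s * Real.cos (c * s))
        - c * ∫ s in (0:ℝ)..t, y s * Real.sin (c * s) := by
    intro t ht
    have s1 : (∫ s in (0:ℝ)..t, y s * Real.sin (c * s))
        = (-lam) * ∫ s in (0:ℝ)..t, Real.sin (c * s) * ∫ r in (0:ℝ)..s, H r := by
      rw [← intervalIntegral.integral_const_mul]
      apply intervalIntegral.integral_congr
      intro s hs
      rw [uIcc_of_le ht.1] at hs
      have hsσ : s ∈ Icc (0:ℝ) σ := ⟨hs.1, hs.2.trans ht.2⟩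
      show y s * Real.sin (c * s) = -lam * (Real.sin (c * s) * ∫ r in (0:ℝ)..s, H r)
      rw [hy s hsσ]
      ring
    have s2 : (∫ s in (0:ℝ)..t, Real.sin (c * s) * ∫ r in (0:ℝ)..s, H r)
        = ∫ r in (0:ℝ)..t, H r * ∫ s in r..t, Real.sin (c * s) :=
      triangle_swap' ht.1 (hH_int.mono_set (hsub t ht))
        (Real.continuous_sin.comp (continuous_const.mul continuous_id))
    have s3 : c * (∫ r in (0:ℝ)..t, H r * ∫ s in r..t, Real.sin (c * s))
        = ∫ r in (0:ℝ)..t, H r * (Real.cos (c * r) - Real.cos (c * t)) := by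
      rw [← intervalIntegral.integral_const_mul]
      apply intervalIntegral.integral_congr
      intro r _
      dsimp only
      rw [← hsinint r t, intervalIntegral.integral_const_mul]
      ring
    have s4 : (∫ r in (0:ℝ)..t, H r * (Real.cos (c * r) - Real.cos (c * t)))
        = (∫ r in (0:ℝ)..t, H r * Real.cos (c * r))
          - Real.cos (c * t) * ∫ r in (0:ℝ)..t, H r := by
      have i2 : IntervalIntegrable (fun r => H r * Real.cos (c * t)) volume 0 t :=
        (hH_ii t ht).mul_const _
      have e : (fun r => H r * (Real.cos (c * r) - Real.cos (c * t)))
          = fun r => H r * Real.cos (c * r) - H r * Real.cos (c * t) := by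
        funext r; ring
      rw [e, intervalIntegral.integral_sub (hHcos_ii t ht) i2,
        intervalIntegral.integral_mul_const]
      ring
    have e2 : c * (∫ s in (0:ℝ)..t, y s * Real.sin (c * s))
        = -lam * ((∫ s in (0:ℝ)..t, H s * Real.cos (c * s))
            - Real.cos (c * t) * ∫ s in (0:ℝ)..t, H s) := by
      calc c * (∫ s in (0:ℝ)..t, y s * Real.sin (c * s))
          = (-lam) * (c * ∫ r in (0:ℝ)..t, H r * ∫ s in r..t, Real.sin (c * s)) := by
            rw [s1, s2]; ring
        _ = (-lam) * ∫ r in (0:ℝ)..t, H r * (Real.cos (c * r) - Real.cos (c * t)) := by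
            rw [s3]
        _ = -lam * ((∫ s in (0:ℝ)..t, H s * Real.cos (c * s))
            - Real.cos (c * t) * ∫ s in (0:ℝ)..t, H s) := by rw [s4]
    rw [hy t ht]
    linear_combination e2
  -- Identity B
  have hB : ∀ t ∈ Icc (0:ℝ) σ, c * (x t * Real.sin (c * t)) =
      ∫ s in (0:ℝ)..t, (c * (y s * Real.sin (c * s)) + (c * c) * (x s * Real.cos (c * s))) := by
    intro t ht
    set F : ℝ → ℝ := fun u => κ + ∫ r in (0:ℝ)..u, y r with hFdef
    set G : ℝ → ℝ := fun u => c * (F u * Real.sin (c * u)) with hGdef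
    have hFx : ∀ u ∈ Icc (0:ℝ) t, F u = x u := fun u hu =>
      (hx u ⟨hu.1, hu.2.trans ht.2⟩).symm
    have hsin_cont : Continuous (fun u : ℝ => Real.sin (c * u)) :=
      Real.continuous_sin.comp (continuous_const.mul continuous_id)
    have hcos_cont : Continuous (fun u : ℝ => Real.cos (c * u)) :=
      Real.continuous_cos.comp (continuous_const.mul continuous_id)
    have hcontG : ContinuousOn G (Icc 0 t) := by
      have h1 : ContinuousOn (fun u => c * (x u * Real.sin (c * u))) (Icc 0 t) :=
        continuousOn_const.mul ((hcx.mono (hsub t ht)).mul hsin_cont.continuousOn)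
      exact h1.congr (fun u hu => by simp only [hGdef, hFx u hu])
    have hderiv : ∀ u ∈ Ioo (0:ℝ) t, HasDerivWithinAt G
        (c * (y u * Real.sin (c * u)) + (c * c) * (x u * Real.cos (c * u))) (Ioi u) u := by
      intro u hu
      have huσ : u ∈ Ioo (0:ℝ) σ := ⟨hu.1, hu.2.trans_le ht.2⟩
      have hyc : ContinuousAt y u := hcy.continuousAt (Icc_mem_nhds huσ.1 huσ.2)
      have hymeas : StronglyMeasurableAtFilter y (nhds u) volume :=
        ContinuousOn.stronglyMeasurableAtFilter isOpen_Ioo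
          (hcy.mono Ioo_subset_Icc_self) u huσ
      have hFd : HasDerivAt F (y u) u := by
        apply HasDerivAt.const_add
        exact intervalIntegral.integral_hasDerivAt_right
          (hy_ii u ⟨huσ.1.le, huσ.2.le⟩) hymeas hyc
      have h1 : HasDerivAt (fun w : ℝ => c * w) c u := by
        simpa using (hasDerivAt_id u).const_mul c
      have hsind : HasDerivAt (fun w : ℝ => Real.sin (c * w)) (Real.cos (c * u) * c) u :=
        (Real.hasDerivAt_sin (c * u)).comp u h1
      have hGd : HasDerivAt G
          (c * (y u * Real.sin (c * u) + F u * (Real.cos (c * u) * c))) u :=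
        (hFd.mul hsind).const_mul c
      have heq : c * (y u * Real.sin (c * u) + F u * (Real.cos (c * u) * c))
          = c * (y u * Real.sin (c * u)) + (c * c) * (x u * Real.cos (c * u)) := by
        rw [hFx u (Ioo_subset_Icc_self hu)]; ring
      rw [heq] at hGd
      exact hGd.hasDerivWithinAt
    have hint' : IntervalIntegrable
        (fun s => c * (y s * Real.sin (c * s)) + (c * c) * (x s * Real.cos (c * s)))
        volume 0 t := by
      apply ContinuousOn.intervalIntegrable_of_Icc ht.1
      exact (continuousOn_const.mul ((hcy.mono (hsub t ht)).mul hsin_cont.continuousOn)).add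
        (continuousOn_const.mul ((hcx.mono (hsub t ht)).mul hcos_cont.continuousOn))
    have hFTC := intervalIntegral.integral_eq_sub_of_hasDeriv_right_of_le
      ht.1 hcontG hderiv hint'
    have hGt : G t = c * (x t * Real.sin (c * t)) := by
      simp only [hGdef, hFx t ⟨ht.1, le_rfl⟩]
    have hG0 : G 0 = 0 := by
      simp [hGdef, hFdef]
    rw [hFTC, hGt, hG0, sub_zero]
  -- the key nonnegativity
  have hE : ∀ t ∈ Icc (0:ℝ) σ,
      0 ≤ c * (x t * Real.sin (c * t)) + y t * Real.cos (c * t) := by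
    intro t ht
    have hsin_cont : Continuous (fun u : ℝ => Real.sin (c * u)) :=
      Real.continuous_sin.comp (continuous_const.mul continuous_id)
    have hcos_cont : Continuous (fun u : ℝ => Real.cos (c * u)) :=
      Real.continuous_cos.comp (continuous_const.mul continuous_id)
    have iys : IntervalIntegrable (fun s => c * (y s * Real.sin (c * s))) volume 0 t :=
      ContinuousOn.intervalIntegrable_of_Icc ht.1
        (continuousOn_const.mul ((hcy.mono (hsub t ht)).mul hsin_cont.continuousOn))
    have ixc : IntervalIntegrable (fun s => (c * c) * (x s * Real.cos (c * s))) volume 0 t :=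
      ContinuousOn.intervalIntegrable_of_Icc ht.1
        (continuousOn_const.mul ((hcx.mono (hsub t ht)).mul hcos_cont.continuousOn))
    have ixc' : IntervalIntegrable (fun s => x s * Real.cos (c * s)) volume 0 t :=
      ContinuousOn.intervalIntegrable_of_Icc ht.1
        ((hcx.mono (hsub t ht)).mul hcos_cont.continuousOn)
    have hsplit : (∫ s in (0:ℝ)..t, (c * (y s * Real.sin (c * s)) + (c * c) * (x s * Real.cos (c * s))))
        = c * (∫ s in (0:ℝ)..t, y s * Real.sin (c * s))
          + (c * c) * ∫ s in (0:ℝ)..t, x s * Real.cos (c * s) := by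
      rw [intervalIntegral.integral_add iys ixc, intervalIntegral.integral_const_mul,
        intervalIntegral.integral_const_mul]
    have hfinal : c * (x t * Real.sin (c * t)) + y t * Real.cos (c * t)
        = (c * c) * (∫ s in (0:ℝ)..t, x s * Real.cos (c * s))
          - lam * ∫ s in (0:ℝ)..t, H s * Real.cos (c * s) := by
      rw [hB t ht, hA t ht, hsplit]; ring
    rw [hfinal]
    have hHc_ii := hHcos_ii t ht
    have hmerge : (c * c) * (∫ s in (0:ℝ)..t, x s * Real.cos (c * s))
          - lam * (∫ s in (0:ℝ)..t, H s * Real.cos (c * s))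
        = ∫ s in (0:ℝ)..t,
            ((c * c) * (x s * Real.cos (c * s)) - lam * (H s * Real.cos (c * s))) := by
      rw [intervalIntegral.integral_sub ixc (hHc_ii.const_mul lam),
        intervalIntegral.integral_const_mul, intervalIntegral.integral_const_mul]
    rw [hmerge]
    apply intervalIntegral.integral_nonneg ht.1
    intro u hu
    have huσ : u ∈ Icc (0:ℝ) σ := ⟨hu.1, hu.2.trans ht.2⟩
    have h1 := hHle u huσ
    have h2 : 0 ≤ Real.cos (c * u) := (hcos u hu.1 huσ.2).le
    nlinarith [mul_nonneg (sub_nonneg.2 h1) h2]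
  -- angular part
  have hcosθ : ∀ u ∈ Icc (0:ℝ) σ, 0 < Real.cos (θ u) := by
    intro u hu
    obtain ⟨hρ, hxe, _⟩ := hpolar u hu
    have hxp := hxpos u hu
    rw [hxe] at hxp
    by_contra hcc
    push_neg at hcc
    nlinarith
  have hθIoo : ∀ u ∈ Icc (0:ℝ) σ, θ u ∈ Ioo (-(Real.pi / 2)) (Real.pi / 2) := by
    intro u hu
    by_contra hcon
    have habs : Real.pi / 2 ≤ |θ u| := by
      by_contra hl
      push_neg at hl
      exact hcon (mem_Ioo.mpr (abs_lt.mp hl))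
    have hIVT := intermediate_value_Icc hu.1
      (continuous_abs.comp_continuousOn (hθcont.mono (hsub u hu)))
    have hmem : Real.pi / 2 ∈ Icc (|θ 0|) (|θ u|) := by
      rw [hθ0, abs_zero]
      exact ⟨Real.pi_div_two_pos.le, habs⟩
    obtain ⟨v, hv, hveq⟩ := hIVT hmem
    have hcv : Real.cos (θ v) = 0 := by
      rw [← Real.cos_abs]
      simp only [Function.comp] at hveq
      rw [hveq, Real.cos_pi_div_two]
    exact absurd hcv (ne_of_gt (hcosθ v ((hsub u hu) hv)))
  intro t ht
  obtain ⟨hρt, hxt, hyt⟩ := hpolar t ht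
  have hθt := hθIoo t ht
  have hsinθ : Real.sin (θ t) ≤ 0 := by
    have hy' := hynp t ht
    rw [hyt] at hy'
    nlinarith
  have hθnp : θ t ≤ 0 := by
    by_contra hpos
    push_neg at hpos
    have : 0 < Real.sin (θ t) :=
      Real.sin_pos_of_pos_of_lt_pi hpos
        (lt_trans hθt.2 (by linarith [Real.pi_pos]))
    linarith
  refine ⟨⟨hθt.1.le, hθnp⟩, ?_⟩
  -- quantitative bound
  have hxpos' := hxpos t ht
  have hE' := hE t ht
  have hcost := hcos t ht.1 ht.2
  have hctle : c * t ≤ σ * c := by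
    have h1 : c * t ≤ c * σ := mul_le_mul_of_nonneg_left ht.2 hc0
    linarith [mul_comm c σ]
  have hctmem : c * t ∈ Ioo (-(Real.pi / 2)) (Real.pi / 2) :=
    ⟨by nlinarith [Real.pi_div_two_pos, mul_nonneg hc0 ht.1],
     lt_of_le_of_lt hctle hsmall⟩
  have hscmem : σ * c ∈ Ioo (-(Real.pi / 2)) (Real.pi / 2) :=
    ⟨by nlinarith [Real.pi_div_two_pos, mul_nonneg hσ.le hc0], hsmall⟩
  have ttan : Real.tan (c * t) ≤ Real.tan (σ * c) :=
    Real.strictMonoOn_tan.monotoneOn hctmem hscmem hctle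
  have hid : Real.tan (c * t) * Real.cos (c * t) = Real.sin (c * t) := by
    rw [Real.tan_eq_sin_div_cos]
    field_simp
  have key2 : -(y t) ≤ x t * (c * Real.tan (σ * c)) := by
    have h4 : -(y t) ≤ c * Real.tan (c * t) * x t := by
      have hcne : Real.cos (c * t) ≠ 0 := ne_of_gt hcost
      have h7 : -(y t) * Real.cos (c * t) ≤ c * (x t * Real.sin (c * t)) := by linarith
      have h8 : c * Real.tan (c * t) * x t * Real.cos (c * t)
          = c * (x t * Real.sin (c * t)) := by
        rw [Real.tan_eq_sin_div_cos]; field_simp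
      have h9 : -(y t) * Real.cos (c * t) ≤ c * Real.tan (c * t) * x t * Real.cos (c * t) := by
        rw [h8]; exact h7
      exact le_of_mul_le_mul_right h9 hcost
    have h5 : c * Real.tan (c * t) * x t ≤ c * Real.tan (σ * c) * x t := by
      have := mul_le_mul_of_nonneg_left ttan hc0
      nlinarith [hxpos'.le]
    linarith
  have htanθ : Real.tan (θ t) = y t / x t := by
    rw [Real.tan_eq_sin_div_cos, hxt, hyt, mul_div_mul_left _ _ (ne_of_gt hρt)]
  have harct : -(θ t) = Real.arctan (-(y t) / x t) := by
    have htn : Real.tan (-(θ t)) = -(y t) / x t := by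
      rw [Real.tan_neg, htanθ]
      ring
    rw [← htn, Real.arctan_tan (by linarith [hθt.2]) (by linarith [hθt.1])]
  rw [abs_of_nonpos hθnp, harct]
  apply Real.arctan_strictMono.monotone
  rw [div_le_iff₀ hxpos']
  linarith [key2]
end
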